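/- arXiv:1405.5479 — 7 statements merged into one kernel-verified Lean document; each statement's English description precedes it below -/
import Mathlib

section
/- Let G be a finite group, N a normal subgroup, ψ an irreducible character of N, and H a subgroup of the inertial subgroup I_G(ψ) containing N. Suppose ψ extends to a character ψ̃ of H. Then: (1) ψ̃ is irreducible; (2) for any irreducible character χ of H/N, the inflation Inf_{H/N}^H(χ) is an irreducible character of H; and (3) the products ψ̃ · Inf_{H/N}^H(χ), as χ ranges over Irr(H/N), are pairwise distinct irreducible characters of H. -/
open scoped Classical

noncomputable section


namespace CliffordAux

open CategoryTheory Representation Module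

variable {A : Type} [Group A] [Fintype A]


variable {A : Type} [Group A] [Fintype A]

/-- The sum of `χ(a⁻¹)χ(a)` equals `|A| · dim invariants(linHom V V)`. -/
lemma sum_char_eq (X : FDRep ℂ A) :
    ∑ a : A, X.character a⁻¹ * X.character a
      = (Fintype.card A : ℂ) * (finrank ℂ ((linHom X.ρ X.ρ).invariants) : ℂ) := by
  haveI : Invertible (Fintype.card A : ℂ) :=
    invertibleOfNonzero (Nat.cast_ne_zero.mpr Fintype.card_ne_zero)
  have h := FDRep.average_char_eq_finrank_invariants (FDRep.of (linHom X.ρ X.ρ))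
  have h2 : ∀ a : A, (FDRep.of (linHom X.ρ X.ρ)).character a
      = X.character a⁻¹ * X.character a := fun a => FDRep.char_linHom X X a
  rw [Finset.sum_congr rfl (fun a _ => h2 a)] at h
  have h3 : (FDRep.of (linHom X.ρ X.ρ)).ρ = linHom X.ρ X.ρ := FDRep.of_ρ' _
  rw [h3] at h
  have := congrArg (fun z => (Fintype.card A : ℂ) * z) h
  simpa [smul_eq_mul, mul_invOf_cancel_left'] using this

lemma invariants_equiv_finrank (X Y : FDRep ℂ A) :
    finrank ℂ ((linHom X.ρ Y.ρ).invariants) = finrank ℂ (X ⟶ Y) :=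
  (Representation.linHom.invariantsEquivFDRepHom X Y).finrank_eq

lemma sum_char_simple (X : FDRep ℂ A) (hX : Simple X) :
    ∑ a : A, X.character a⁻¹ * X.character a = (Fintype.card A : ℂ) := by
  haveI := hX
  rw [sum_char_eq, invariants_equiv_finrank, FDRep.finrank_hom_simple_simple X X,
    if_pos ⟨Iso.refl X⟩]
  norm_num


variable {A : Type} [Group A] [Fintype A]

lemma id_mem_invariants (X : FDRep ℂ A) :
    (LinearMap.id : X →ₗ[ℂ] X) ∈ (linHom X.ρ X.ρ).invariants := by
  intro g
  show X.ρ g ∘ₗ LinearMap.id ∘ₗ X.ρ g⁻¹ = LinearMap.id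
  rw [LinearMap.id_comp]
  ext v
  simp [LinearMap.comp_apply, ← Module.End.mul_apply, ← map_mul]

omit [Fintype A] in
lemma nontrivial_of_finrank_inv (X : FDRep ℂ A)
    (h1 : finrank ℂ ((linHom X.ρ X.ρ).invariants) = 1) : Nontrivial X := by
  by_contra hn
  rw [not_nontrivial_iff_subsingleton] at hn
  haveI : Subsingleton (X →ₗ[ℂ] X) := ⟨fun f g => LinearMap.ext fun v => Subsingleton.elim _ _⟩
  haveI : Subsingleton ((linHom X.ρ X.ρ).invariants) := ⟨fun f g => Subtype.ext (Subsingleton.elim _ _)⟩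
  rw [finrank_zero_of_subsingleton] at h1
  exact one_ne_zero h1.symm

/-- If the invariants of `End(X)` are 1-dimensional, every invariant endomorphism is scalar. -/
lemma scalar_of_invariant (X : FDRep ℂ A)
    (h1 : finrank ℂ ((linHom X.ρ X.ρ).invariants) = 1)
    (f : X →ₗ[ℂ] X) (hf : f ∈ (linHom X.ρ X.ρ).invariants) :
    ∃ c : ℂ, f = c • LinearMap.id := by
  haveI := nontrivial_of_finrank_inv X h1
  set S := (linHom X.ρ X.ρ).invariants
  have hid : (⟨LinearMap.id, id_mem_invariants X⟩ : S) ≠ 0 := by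
    intro h
    obtain ⟨v, hv⟩ := exists_ne (0 : X)
    have := congrArg (fun z => (z : X →ₗ[ℂ] X) v) (congrArg Subtype.val h)
    simpa using hv this
  have hspan : Submodule.span ℂ {(⟨LinearMap.id, id_mem_invariants X⟩ : S)} = ⊤ :=
    (finrank_eq_one_iff_of_nonzero _ hid).mp h1
  have : (⟨f, hf⟩ : S) ∈ Submodule.span ℂ {(⟨LinearMap.id, id_mem_invariants X⟩ : S)} := by
    rw [hspan]; trivial
  obtain ⟨c, hc⟩ := Submodule.mem_span_singleton.mp this
  exact ⟨c, by simpa using (congrArg Subtype.val hc).symm⟩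


variable {A : Type} [Group A] [Fintype A]

lemma submodule_trivial (X : FDRep ℂ A)
    (h1 : finrank ℂ ((linHom X.ρ X.ρ).invariants) = 1)
    (p : Submodule ℂ X) (hp : ∀ (g : A) (v : X), v ∈ p → X.ρ g v ∈ p) :
    p = ⊥ ∨ p = ⊤ := by
  obtain ⟨q, hq⟩ := Submodule.exists_isCompl p
  set π₀ : X →ₗ[ℂ] X := p.subtype ∘ₗ (p.projectionOnto q hq) with hπ₀
  have hπ₀p : ∀ v : X, π₀ v ∈ p := fun v => (p.projectionOnto q hq v).2
  have hπ₀fix : ∀ v ∈ p, π₀ v = v := fun v hv => by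
    simp [hπ₀, Submodule.projectionOnto_apply_left hq ⟨v, hv⟩]
  set π : X →ₗ[ℂ] X := (Fintype.card A : ℂ)⁻¹ • ∑ g : A, X.ρ g ∘ₗ π₀ ∘ₗ X.ρ g⁻¹ with hπ
  have hcard : (Fintype.card A : ℂ) ≠ 0 := Nat.cast_ne_zero.mpr Fintype.card_ne_zero
  have hπmem : π ∈ (linHom X.ρ X.ρ).invariants := by
    intro h
    show X.ρ h ∘ₗ π ∘ₗ X.ρ h⁻¹ = π
    ext v
    simp only [hπ, LinearMap.comp_apply, LinearMap.smul_apply, LinearMap.sum_apply, map_smul,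
      map_sum]
    congr 1
    refine Fintype.sum_equiv (Equiv.mulLeft h) _ _ fun g => ?_
    simp only [LinearMap.comp_apply, Equiv.coe_mulLeft]
    rw [map_mul, mul_inv_rev, map_mul]
    rfl
  have hπp : ∀ v : X, π v ∈ p := by
    intro v
    simp only [hπ, LinearMap.smul_apply, LinearMap.sum_apply]
    exact p.smul_mem _ (Submodule.sum_mem p fun g _ => hp g _ (hπ₀p _))
  have hπfix : ∀ v ∈ p, π v = v := by
    intro v hv
    have : ∀ g : A, (X.ρ g ∘ₗ π₀ ∘ₗ X.ρ g⁻¹) v = v := by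
      intro g
      simp only [LinearMap.comp_apply]
      rw [hπ₀fix _ (hp g⁻¹ v hv), ← Module.End.mul_apply, ← map_mul, mul_inv_cancel, map_one,
        Module.End.one_apply]
    simp only [hπ, LinearMap.smul_apply, LinearMap.sum_apply, this, Finset.sum_const,
      Finset.card_univ, ← Nat.cast_smul_eq_nsmul ℂ, smul_smul, inv_mul_cancel₀ hcard, one_smul]
  obtain ⟨c, hc⟩ := scalar_of_invariant X h1 π hπmem
  by_cases hc0 : c = 0
  · left
    rw [Submodule.eq_bot_iff]
    intro v hv
    have := hπfix v hv
    rw [hc, hc0, zero_smul] at this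
    simpa using this.symm
  · right
    rw [Submodule.eq_top_iff']
    intro v
    have : π v = c • v := by rw [hc]; simp
    have hv : v = c⁻¹ • π v := by rw [this, smul_smul, inv_mul_cancel₀ hc0, one_smul]
    rw [hv]
    exact p.smul_mem _ (hπp v)


lemma simple_of_invariants_one (X : FDRep ℂ A)
    (h1 : finrank ℂ ((linHom X.ρ X.ρ).invariants) = 1) : Simple X := by
  haveI := nontrivial_of_finrank_inv X h1
  constructor
  intro Y f m
  constructor
  · intro hiso h0
    obtain ⟨v, hv⟩ := exists_ne (0 : X)
    apply hv
    have h' : f.hom ((inv f).hom v) = v :=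
      congrFun (congrArg (fun (m : X ⟶ X) => (m.hom : X → X)) (IsIso.inv_hom_id f)) v
    have hfh : f.hom ((inv f).hom v) = (0 : Y ⟶ X).hom ((inv f).hom v) :=
      congrFun (congrArg (fun (m : Y ⟶ X) => (m.hom : Y → X)) h0) _
    exact h'.symm.trans hfh
  · intro hne
    have hcomm : ∀ (g : A) (v : Y), (f.hom.hom.hom : Y →ₗ[ℂ] X) (Y.ρ g v)
        = X.ρ g ((f.hom.hom.hom : Y →ₗ[ℂ] X) v) := fun g v =>
      congrFun (congrArg (fun (m : Y.V ⟶ X.V) => (m : Y → X)) (f.comm g)) v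
    -- the range of f.hom is an invariant submodule of X
    have hrinv : ∀ (g : A) (v : X), v ∈ LinearMap.range (f.hom.hom.hom : Y →ₗ[ℂ] X) →
        X.ρ g v ∈ LinearMap.range (f.hom.hom.hom : Y →ₗ[ℂ] X) := by
      rintro g v ⟨w, rfl⟩
      exact ⟨Y.ρ g w, hcomm g w⟩
    have hrange : LinearMap.range (f.hom.hom.hom : Y →ₗ[ℂ] X) = ⊤ := by
      rcases submodule_trivial X h1 (LinearMap.range (f.hom.hom.hom : Y →ₗ[ℂ] X)) hrinv with h | h
      · exfalso
        apply hne
        have hz : ∀ v : Y, f.hom v = 0 := by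
          intro v
          have : f.hom v ∈ LinearMap.range (f.hom.hom.hom : Y →ₗ[ℂ] X) := ⟨v, rfl⟩
          rw [h] at this
          simpa using this
        exact Action.Hom.ext (by ext v; exact hz v)
      · exact h
    -- the kernel is trivial, using Mono
    have hker : LinearMap.ker (f.hom.hom.hom : Y →ₗ[ℂ] X) = ⊥ := by
      set K := LinearMap.ker (f.hom.hom.hom : Y →ₗ[ℂ] X) with hK
      have hKinv : ∀ (g : A) (v : Y), v ∈ K → Y.ρ g v ∈ K := by
        intro g v hv
        rw [hK, LinearMap.mem_ker] at hv ⊢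
        exact (hcomm g v).trans ((congrArg (X.ρ g) hv).trans (map_zero _))
      -- build the subrepresentation on K
      let ρ' : A →* (↥K →ₗ[ℂ] ↥K) :=
        { toFun := fun g => (Y.ρ g).restrict (fun v hv => hKinv g v hv)
          map_one' := by
            ext v
            show (Y.ρ 1) v.1 = v.1
            rw [map_one]; rfl
          map_mul' := fun g h => by
            ext v
            show (Y.ρ (g * h)) v.1 = (Y.ρ g) ((Y.ρ h) v.1)
            rw [map_mul]; rfl }
      let Z : FDRep ℂ A := FDRep.of ρ'
      let u : Z ⟶ Y := ⟨ObjectProperty.homMk (ModuleCat.ofHom K.subtype), fun g => by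
        ext v
        rfl⟩
      have hu : u ≫ f = (0 : Z ⟶ Y) ≫ f := by
        rw [Limits.zero_comp]
        apply Action.Hom.ext
        have : ∀ v : ↥K, f.hom (K.subtype v) = 0 := fun v => v.2
        exact (by ext v; exact this v)
      have hu0 : u = 0 := (cancel_mono f).mp hu
      rw [Submodule.eq_bot_iff]
      intro v hv
      exact congrFun (congrArg (fun (m : Z ⟶ Y) => (m.hom : Z → Y)) hu0) ⟨v, hv⟩
    -- f.hom bijective, build inverse
    have hbij : Function.Bijective (f.hom.hom.hom : Y →ₗ[ℂ] X) :=
      ⟨LinearMap.ker_eq_bot.mp hker, LinearMap.range_eq_top.mp hrange⟩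
    let e : Y ≃ₗ[ℂ] X := LinearEquiv.ofBijective _ hbij
    haveI : IsIso f.hom := by
      refine ⟨ObjectProperty.homMk (ModuleCat.ofHom (e.symm : X →ₗ[ℂ] Y)), ?_, ?_⟩
      · exact (by ext v; exact e.symm_apply_apply v)
      · exact (by ext v; exact e.apply_symm_apply v)
    infer_instance

variable {B : Type} [Group B] [Fintype B] {Nb : Type} [Group Nb] [Fintype Nb]

variable {A : Type} [Group A] [Fintype A]

variable {B : Type} [Group B] [Fintype B] {Nb : Type} [Group Nb] [Fintype Nb]

/-- Key lemma: if the `Nb`-invariants of `End(V)` are 1-dimensional, the sum of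
`χ(x⁻¹)χ(x)` over any "coset" `h·ι(Nb)` is independent of `h`. -/
lemma key_coset_sum (ι : Nb →* B) (V : FDRep ℂ B)
    (hinv : finrank ℂ ((linHom (V.ρ.comp ι) (V.ρ.comp ι)).invariants) = 1)
    (h : B) :
    ∑ n : Nb, V.character ((h * ι n)⁻¹) * V.character (h * ι n)
      = ∑ n : Nb, V.character ((ι n)⁻¹) * V.character (ι n) := by
  set E : Representation ℂ B (V →ₗ[ℂ] V) := linHom V.ρ V.ρ with hE
  have htr : ∀ b : B, LinearMap.trace ℂ (V →ₗ[ℂ] V) (E b)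
      = V.character b⁻¹ * V.character b := fun b => FDRep.char_linHom V V b
  set S : (V →ₗ[ℂ] V) →ₗ[ℂ] (V →ₗ[ℂ] V) := ∑ n : Nb, E (ι n) with hS
  have hEι : ∀ m : Nb, ((linHom (V.ρ.comp ι) (V.ρ.comp ι)) m : (V →ₗ[ℂ] V) →ₗ[ℂ] (V →ₗ[ℂ] V))
      = E (ι m) := by
    intro m
    refine LinearMap.ext fun f => ?_
    show V.ρ (ι m) ∘ₗ f ∘ₗ V.ρ (ι m⁻¹) = V.ρ (ι m) ∘ₗ f ∘ₗ V.ρ ((ι m)⁻¹)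
    rw [map_inv]
  have hSmem : ∀ f : V →ₗ[ℂ] V, S f ∈ (linHom (V.ρ.comp ι) (V.ρ.comp ι)).invariants := by
    intro f m
    rw [hEι m]
    have expand : E (ι m) (S f) = ∑ n : Nb, E (ι (m * n)) f := by
      rw [hS, LinearMap.sum_apply, map_sum]
      refine Finset.sum_congr rfl fun n _ => ?_
      rw [← Module.End.mul_apply, ← map_mul, ← map_mul]
    rw [expand, hS, LinearMap.sum_apply]
    exact Fintype.sum_equiv (Equiv.mulLeft m) _ _ fun n => rfl
  set idV : V →ₗ[ℂ] V := LinearMap.id with hidV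
  have hid : E h idV = idV := by
    refine LinearMap.ext fun v => ?_
    show V.ρ h (idV (V.ρ h⁻¹ v)) = v
    rw [hidV, LinearMap.id_apply, ← Module.End.mul_apply, ← map_mul, mul_inv_cancel, map_one,
      Module.End.one_apply]
  have hfix : ∀ f : V →ₗ[ℂ] V, E h (S f) = S f := by
    intro f
    obtain ⟨c, hc⟩ := scalar_of_invariant (FDRep.of (V.ρ.comp ι)) hinv (S f) (hSmem f)
    rw [show (S f : V →ₗ[ℂ] V) = c • idV from hc, map_smul, hid]
  have hcomp : ∑ n : Nb, (E (h * ι n) : (V →ₗ[ℂ] V) →ₗ[ℂ] (V →ₗ[ℂ] V)) = S := by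
    refine LinearMap.ext fun f => ?_
    rw [LinearMap.sum_apply]
    have : ∀ n : Nb, E (h * ι n) f = E h (E (ι n) f) := fun n => by
      rw [← Module.End.mul_apply, ← map_mul]
    rw [Finset.sum_congr rfl fun n _ => this n, ← map_sum, ← LinearMap.sum_apply, ← hS, hfix]
  calc ∑ n : Nb, V.character ((h * ι n)⁻¹) * V.character (h * ι n)
      = ∑ n : Nb, LinearMap.trace ℂ (V →ₗ[ℂ] V) (E (h * ι n)) := by
        exact (Finset.sum_congr rfl fun n _ => (htr _)).symm
    _ = LinearMap.trace ℂ (V →ₗ[ℂ] V) S := by rw [← hcomp, map_sum]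
    _ = ∑ n : Nb, LinearMap.trace ℂ (V →ₗ[ℂ] V) (E (ι n)) := by rw [hS, map_sum]
    _ = ∑ n : Nb, V.character ((ι n)⁻¹) * V.character (ι n) :=
        Finset.sum_congr rfl fun n _ => htr _


variable {G : Type} [Group G] [Fintype G] {N H : Subgroup G}


variable {G : Type} [Group G] [Fintype G] {N H : Subgroup G}

/-- The bijection `(H/N') × N ≃ H` via `(c, n) ↦ out c * n`. -/
def cosetEquiv (hNH : N ≤ H) : (↥H ⧸ N.subgroupOf H) × ↥N ≃ ↥H := by
  refine Equiv.ofBijective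
    (fun p => p.1.out * Subgroup.inclusion hNH p.2) ⟨?_, ?_⟩
  · rintro ⟨c, n⟩ ⟨c', n'⟩ hp
    simp only at hp
    have hmem : ∀ m : ↥N, Subgroup.inclusion hNH m ∈ N.subgroupOf H := fun m =>
      Subgroup.mem_subgroupOf.mpr m.2
    have hc : c = c' := by
      have := congrArg (QuotientGroup.mk (s := N.subgroupOf H)) hp
      rwa [QuotientGroup.mk_mul_of_mem _ (hmem n), QuotientGroup.mk_mul_of_mem _ (hmem n'),
        QuotientGroup.out_eq', QuotientGroup.out_eq'] at this
    subst hc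
    have hn : n = n' := Subgroup.inclusion_injective hNH (mul_left_cancel hp)
    rw [hn]
  · intro x
    have hmm : (QuotientGroup.mk x : ↥H ⧸ N.subgroupOf H).out⁻¹ * x ∈ N.subgroupOf H := by
      rw [← QuotientGroup.eq]
      exact QuotientGroup.out_eq' _
    refine ⟨⟨QuotientGroup.mk x, ⟨((QuotientGroup.mk x : ↥H ⧸ N.subgroupOf H).out⁻¹ * x : ↥H),
      Subgroup.mem_subgroupOf.mp hmm⟩⟩, ?_⟩
    show (QuotientGroup.mk x : ↥H ⧸ N.subgroupOf H).out *
      Subgroup.inclusion hNH ⟨((QuotientGroup.mk x : ↥H ⧸ N.subgroupOf H).out⁻¹ * x : ↥H), _⟩ = x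
    refine Subtype.ext ?_
    show ((QuotientGroup.mk x : ↥H ⧸ N.subgroupOf H).out : G)
      * (((QuotientGroup.mk x : ↥H ⧸ N.subgroupOf H).out⁻¹ * x : ↥H) : G) = (x : G)
    rw [Subgroup.coe_mul, Subgroup.coe_inv, mul_inv_cancel_left]

lemma mk_cosetEquiv (hNH : N ≤ H) (c : ↥H ⧸ N.subgroupOf H) (n : ↥N) :
    (QuotientGroup.mk (c.out * Subgroup.inclusion hNH n) : ↥H ⧸ N.subgroupOf H) = c := by
  have hmem : Subgroup.inclusion hNH n ∈ N.subgroupOf H := Subgroup.mem_subgroupOf.mpr n.2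
  rw [QuotientGroup.mk_mul_of_mem _ hmem, QuotientGroup.out_eq']

lemma card_decomp (hNH : N ≤ H) :
    Fintype.card ↥H
      = Fintype.card (↥H ⧸ N.subgroupOf H) * Fintype.card ↥N := by
  rw [← Fintype.card_prod]
  exact (Fintype.card_congr (cosetEquiv hNH)).symm

lemma sum_decomp (hNH : N ≤ H) (f : ↥H → ℂ) :
    ∑ x : ↥H, f x
      = ∑ c : ↥H ⧸ N.subgroupOf H, ∑ n : ↥N, f (c.out * Subgroup.inclusion hNH n) := by
  rw [← Equiv.sum_comp (cosetEquiv hNH) f, Fintype.sum_prod_type]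
  rfl


lemma main_count (hNH : N ≤ H) [(N.subgroupOf H).Normal] (X : FDRep ℂ ↥H) (w : ↥H → ℂ)
    (Φ : ↥H ⧸ N.subgroupOf H → ℂ)
    (hX : ∀ x : ↥H, X.character x = w x * Φ (QuotientGroup.mk x))
    (hw : ∀ h : ↥H, ∑ n : ↥N, w ((h * Subgroup.inclusion hNH n)⁻¹)
      * w (h * Subgroup.inclusion hNH n) = (Fintype.card ↥N : ℂ))
    (hΦ : ∑ c : ↥H ⧸ N.subgroupOf H, Φ c⁻¹ * Φ c
      = (Fintype.card (↥H ⧸ N.subgroupOf H) : ℂ)) :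
    Simple X := by
  apply simple_of_invariants_one
  have hterm : ∀ x : ↥H, X.character x⁻¹ * X.character x
      = (w x⁻¹ * w x) * (Φ (QuotientGroup.mk x)⁻¹ * Φ (QuotientGroup.mk x)) := by
    intro x
    rw [hX, hX]
    have hmkinv : (QuotientGroup.mk x⁻¹ : ↥H ⧸ N.subgroupOf H) = (QuotientGroup.mk x)⁻¹ := rfl
    rw [hmkinv]; ring
  have hsum : ∑ x : ↥H, X.character x⁻¹ * X.character x = (Fintype.card ↥H : ℂ) := by
    rw [Finset.sum_congr rfl fun x _ => hterm x, sum_decomp hNH]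
    have hinner : ∀ c : ↥H ⧸ N.subgroupOf H,
        ∑ n : ↥N, (w ((c.out * Subgroup.inclusion hNH n)⁻¹) * w (c.out * Subgroup.inclusion hNH n))
          * (Φ (QuotientGroup.mk (c.out * Subgroup.inclusion hNH n))⁻¹
            * Φ (QuotientGroup.mk (c.out * Subgroup.inclusion hNH n)))
        = (Fintype.card ↥N : ℂ) * (Φ c⁻¹ * Φ c) := by
      intro c
      have : ∀ n : ↥N,
          (w ((c.out * Subgroup.inclusion hNH n)⁻¹) * w (c.out * Subgroup.inclusion hNH n))
          * (Φ (QuotientGroup.mk (c.out * Subgroup.inclusion hNH n))⁻¹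
            * Φ (QuotientGroup.mk (c.out * Subgroup.inclusion hNH n)))
          = (w ((c.out * Subgroup.inclusion hNH n)⁻¹) * w (c.out * Subgroup.inclusion hNH n))
            * (Φ c⁻¹ * Φ c) := by
        intro n
        rw [mk_cosetEquiv hNH]
      rw [Finset.sum_congr rfl fun n _ => this n, ← Finset.sum_mul, hw c.out]
    rw [Finset.sum_congr rfl fun c _ => hinner c, ← Finset.mul_sum, hΦ, card_decomp hNH]
    push_cast
    ring
  rw [sum_char_eq X] at hsum
  have hcard : (Fintype.card ↥H : ℂ) ≠ 0 := Nat.cast_ne_zero.mpr Fintype.card_ne_zero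
  have h1 : ((finrank ℂ ((linHom X.ρ X.ρ).invariants) : ℕ) : ℂ) = 1 :=
    mul_left_cancel₀ hcard (hsum.trans (mul_one _).symm)
  exact_mod_cast h1

end CliffordAux
open Module
open scoped CategoryTheory.MonoidalCategory


/-- `f` is the character of some finite-dimensional complex representation of `G`. -/
def IsChar (G : Type) [Group G] (f : G → ℂ) : Prop :=
  ∃ V : FDRep ℂ G, f = V.character

/-- `f` is the character of some irreducible finite-dimensional complex representation. -/
def IsIrrChar (G : Type) [Group G] (f : G → ℂ) : Prop :=
  ∃ V : FDRep ℂ G, CategoryTheory.Simple V ∧ f = V.character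

/-- The standard inner product of class functions. -/
def charInner (G : Type) [Group G] [Fintype G] (f g : G → ℂ) : ℂ :=
  (Fintype.card G : ℂ)⁻¹ * ∑ x : G, f x * (starRingEnd ℂ) (g x)

/-- `χ` is a constituent of `φ`. -/
def IsConstituent (G : Type) [Group G] [Fintype G] (φ χ : G → ℂ) : Prop :=
  charInner G φ χ ≠ 0

/-- A supercharacter theory of a finite group `G`: a partition `K` of `G` into unions of
conjugacy classes together with a set `X` of characters, of equal (finite) cardinality,
with the characters constant on the blocks, and every irreducible character a constituent
of exactly one member of `X`. -/
def IsSCT (G : Type) [Group G] [Fintype G] (K : Set (Set G)) (X : Set (G → ℂ)) : Prop :=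
  (∅ ∉ K) ∧ (∀ g : G, ∃! B, B ∈ K ∧ g ∈ B) ∧
  (∀ B ∈ K, ∀ g ∈ B, ∀ h : G, h * g * h⁻¹ ∈ B) ∧
  (∀ χ ∈ X, IsChar G χ) ∧
  K.ncard = X.ncard ∧
  (∀ χ ∈ X, ∀ B ∈ K, ∀ g ∈ B, ∀ g' ∈ B, χ g = χ g') ∧
  (∀ φ : G → ℂ, IsIrrChar G φ → ∃! χ, χ ∈ X ∧ IsConstituent G φ χ)

/-- Clifford theory: if an irreducible character `ψ` of a normal subgroup `N` extends to a
character `ψt` of a subgroup `H` of the inertial subgroup `I_G(ψ)` containing `N`, then the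
extension is irreducible, inflations of irreducible characters of `H/N` are irreducible, and
the products `ψt · Inf(χ)` are pairwise distinct irreducible characters of `H`. -/
theorem clifford_extension_products (G : Type) [Group G] [Fintype G]
    (N H : Subgroup G) [hN : N.Normal] (hNH : N ≤ H)
    (ψ : ↥N → ℂ) (hψ : IsIrrChar ↥N ψ)
    (hstab : ∀ h ∈ H, ∀ n : ↥N, ψ ⟨h * ↑n * h⁻¹, hN.conj_mem ↑n n.2 h⟩ = ψ n)
    (ψt : ↥H → ℂ) (hψt : IsChar ↥H ψt)
    (hext : ∀ (n : G) (hn : n ∈ N), ψt ⟨n, hNH hn⟩ = ψ ⟨n, hn⟩) :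
    IsIrrChar ↥H ψt ∧
    (∀ χ : (↥H ⧸ N.subgroupOf H) → ℂ, IsIrrChar _ χ →
      IsIrrChar ↥H (fun h => χ (QuotientGroup.mk h))) ∧
    (∀ χ : (↥H ⧸ N.subgroupOf H) → ℂ, IsIrrChar _ χ →
      IsIrrChar ↥H (fun h => ψt h * χ (QuotientGroup.mk h))) ∧
    (∀ χ₁ χ₂ : (↥H ⧸ N.subgroupOf H) → ℂ, IsIrrChar _ χ₁ → IsIrrChar _ χ₂ →
      (fun h : ↥H => ψt h * χ₁ (QuotientGroup.mk h)) =
        (fun h : ↥H => ψt h * χ₂ (QuotientGroup.mk h)) → χ₁ = χ₂) := by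
  classical
  obtain ⟨V, hV⟩ := hψt
  obtain ⟨W, hWs, hW⟩ := hψ
  subst hV
  subst hW
  have hres : ∀ n : ↥N, V.character (Subgroup.inclusion hNH n) = W.character n := fun n =>
    hext ↑n n.2
  have hcardN : (Fintype.card ↥N : ℂ) ≠ 0 := Nat.cast_ne_zero.mpr Fintype.card_ne_zero
  have hres_inv : finrank ℂ ((Representation.linHom (V.ρ.comp (Subgroup.inclusion hNH))
      (V.ρ.comp (Subgroup.inclusion hNH))).invariants) = 1 := by
    have h1 := CliffordAux.sum_char_eq (FDRep.of (V.ρ.comp (Subgroup.inclusion hNH)))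
    have h2 : ∀ n : ↥N, (FDRep.of (V.ρ.comp (Subgroup.inclusion hNH))).character n
        = V.character (Subgroup.inclusion hNH n) := fun n => rfl
    have hWsum := CliffordAux.sum_char_simple W hWs
    have hre : ∑ n : ↥N, (FDRep.of (V.ρ.comp (Subgroup.inclusion hNH))).character n⁻¹
          * (FDRep.of (V.ρ.comp (Subgroup.inclusion hNH))).character n
        = ∑ n : ↥N, W.character n⁻¹ * W.character n := by
      refine Finset.sum_congr rfl fun n _ => ?_
      rw [h2, h2, hres, hres]
    rw [hre, hWsum] at h1
    exact_mod_cast mul_left_cancel₀ hcardN (h1.symm.trans (mul_one _).symm)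
  have keyw : ∀ h : ↥H, ∑ n : ↥N,
      V.character ((h * Subgroup.inclusion hNH n)⁻¹) * V.character (h * Subgroup.inclusion hNH n)
      = (Fintype.card ↥N : ℂ) := by
    intro h
    rw [CliffordAux.key_coset_sum (Subgroup.inclusion hNH) V hres_inv h]
    have hre : ∀ n : ↥N, V.character ((Subgroup.inclusion hNH n)⁻¹)
        * V.character (Subgroup.inclusion hNH n) = W.character n⁻¹ * W.character n := by
      intro n
      rw [← map_inv (Subgroup.inclusion hNH), hres, hres]
    rw [Finset.sum_congr rfl fun n _ => hre n]
    exact CliffordAux.sum_char_simple W hWs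
  have part1 : CategoryTheory.Simple V := by
    refine CliffordAux.main_count hNH V V.character (fun _ => (1 : ℂ))
      (fun x => (mul_one _).symm) keyw ?_
    simp
  refine ⟨⟨V, part1, rfl⟩, ?_, ?_, ?_⟩
  · rintro χ ⟨U, hUs, rfl⟩
    refine ⟨FDRep.of (U.ρ.comp (QuotientGroup.mk' (N.subgroupOf H))), ?_, ?_⟩
    · refine CliffordAux.main_count hNH _ (fun _ => (1 : ℂ)) U.character
        (fun x => (one_mul _).symm) ?_ (CliffordAux.sum_char_simple U hUs)
      intro h
      simp
    · funext x
      rfl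
  · rintro χ ⟨U, hUs, rfl⟩
    have hchar : ∀ x : ↥H,
        (V ⊗ FDRep.of (U.ρ.comp (QuotientGroup.mk' (N.subgroupOf H)))).character x
        = V.character x * U.character (QuotientGroup.mk x) := by
      intro x
      rw [FDRep.char_tensor]
      rfl
    refine ⟨V ⊗ FDRep.of (U.ρ.comp (QuotientGroup.mk' (N.subgroupOf H))), ?_, ?_⟩
    · exact CliffordAux.main_count hNH _ V.character U.character hchar keyw
        (CliffordAux.sum_char_simple U hUs)
    · funext x
      exact (hchar x).symm
  · rintro χ₁ χ₂ ⟨U₁, hU₁, rfl⟩ ⟨U₂, hU₂, rfl⟩ heq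
    funext c
    apply mul_left_cancel₀ hcardN
    have hstep : ∀ n : ↥N,
        (V.character ((c.out * Subgroup.inclusion hNH n)⁻¹)
          * V.character (c.out * Subgroup.inclusion hNH n)) * U₁.character c
        = (V.character ((c.out * Subgroup.inclusion hNH n)⁻¹)
          * V.character (c.out * Subgroup.inclusion hNH n)) * U₂.character c := by
      intro n
      have hx := congrFun heq (c.out * Subgroup.inclusion hNH n)
      rw [CliffordAux.mk_cosetEquiv hNH] at hx
      calc (V.character ((c.out * Subgroup.inclusion hNH n)⁻¹)
            * V.character (c.out * Subgroup.inclusion hNH n)) * U₁.character c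
          = V.character ((c.out * Subgroup.inclusion hNH n)⁻¹)
            * (V.character (c.out * Subgroup.inclusion hNH n) * U₁.character c) := by ring
        _ = V.character ((c.out * Subgroup.inclusion hNH n)⁻¹)
            * (V.character (c.out * Subgroup.inclusion hNH n) * U₂.character c) := by rw [hx]
        _ = _ := by ring
    calc (Fintype.card ↥N : ℂ) * U₁.character c
        = (∑ n : ↥N, V.character ((c.out * Subgroup.inclusion hNH n)⁻¹)
            * V.character (c.out * Subgroup.inclusion hNH n)) * U₁.character c := by
          rw [keyw c.out]
      _ = ∑ n : ↥N, (V.character ((c.out * Subgroup.inclusion hNH n)⁻¹)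
            * V.character (c.out * Subgroup.inclusion hNH n)) * U₁.character c :=
          Finset.sum_mul _ _ _
      _ = ∑ n : ↥N, (V.character ((c.out * Subgroup.inclusion hNH n)⁻¹)
            * V.character (c.out * Subgroup.inclusion hNH n)) * U₂.character c :=
          Finset.sum_congr rfl fun n _ => hstep n
      _ = (∑ n : ↥N, V.character ((c.out * Subgroup.inclusion hNH n)⁻¹)
            * V.character (c.out * Subgroup.inclusion hNH n)) * U₂.character c :=
          (Finset.sum_mul _ _ _).symm
      _ = (Fintype.card ↥N : ℂ) * U₂.character c := by rw [keyw c.out]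
end
end

section
/- Let G = N ⋊ H with N abelian, let ψ be a linear character of N, and let K ⊆ I_H(ψ) be a subgroup. Define ψ ⋊ χ = Ind_{NK}^G(ψ̃ · Inf_K^{NK}(χ)), where ψ̃ is the extension of ψ to NK given by ψ̃(nk) = ψ(n). Then for all n ∈ N and h ∈ H, (ψ ⋊ χ)(nh) = (1/|K|) · Σ_{k ∈ H, k h k⁻¹ ∈ K} ψ(k n k⁻¹) χ(k h k⁻¹). -/
open scoped Classical Pointwise

noncomputable section

/-- The character `ψ ⋊ χ = Ind_{NK}^G (ψ̃ · Inf_K^{NK} χ)` of `G = N ⋊ H`, written out via the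
induced-character formula: when `N ∩ K = 1` every element of `NK` factors uniquely as `n k`
with `n ∈ N`, `k ∈ K`, `|NK| = |N|·|K|`, and `(ψ̃ · Inf χ)(n k) = ψ n · χ k`. -/
def scr {G : Type} [Group G] [Fintype G] (N K : Subgroup G) (ψ χ : G → ℂ) : G → ℂ :=
  fun g => ((Nat.card N : ℂ) * (Nat.card K : ℂ))⁻¹ *
    ∑ x : G, ∑ n : G, ∑ k : G,
      if n ∈ N ∧ k ∈ K ∧ x * g * x⁻¹ = n * k then ψ n * χ k else 0

/-- Induction of a (super)class function from a subgroup `A` to a subgroup `B ⊇ A`,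
as a function vanishing off `B`. -/
def indOn {G : Type} [Group G] [Fintype G] (A B : Subgroup G) (f : G → ℂ) : G → ℂ :=
  fun g => if g ∈ B then
    (Nat.card A : ℂ)⁻¹ * ∑ x : G, if x ∈ B ∧ x * g * x⁻¹ ∈ A then f (x * g * x⁻¹) else 0
  else 0

lemma double_sum_single {G : Type} [Group G] [Fintype G]
    (N K : Subgroup G) (hdisj : N ⊓ K = ⊥) (ψ χ : G → ℂ)
    (g' n₀ k₀ : G) (hn₀ : n₀ ∈ N) (hk₀ : k₀ ∈ K) (hg : g' = n₀ * k₀) :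
    (∑ n : G, ∑ k : G, if n ∈ N ∧ k ∈ K ∧ g' = n * k then ψ n * χ k else 0)
      = ψ n₀ * χ k₀ := by
  trans (∑ p : G × G, if p.1 ∈ N ∧ p.2 ∈ K ∧ g' = p.1 * p.2 then ψ p.1 * χ p.2 else 0)
  · exact (Fintype.sum_prod_type (f := fun p : G × G =>
      if p.1 ∈ N ∧ p.2 ∈ K ∧ g' = p.1 * p.2 then ψ p.1 * χ p.2 else 0)).symm
  rw [Fintype.sum_eq_single ((n₀, k₀) : G × G)]
  · simp [hn₀, hk₀, hg]
  · rintro ⟨a, b⟩ hne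
    by_cases hc : a ∈ N ∧ b ∈ K ∧ g' = a * b
    · exfalso
      obtain ⟨ha, hb, hab⟩ := hc
      have heq : n₀ * k₀ = a * b := by rw [← hg, hab]
      have hz : n₀⁻¹ * a = k₀ * b⁻¹ := by
        have h0 : n₀⁻¹ * (n₀ * k₀) * b⁻¹ = n₀⁻¹ * (a * b) * b⁻¹ := by rw [heq]
        simpa [mul_assoc] using h0.symm
      have hzN : n₀⁻¹ * a ∈ N := N.mul_mem (N.inv_mem hn₀) ha
      have hzK : n₀⁻¹ * a ∈ K := by rw [hz]; exact K.mul_mem hk₀ (K.inv_mem hb)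
      have h1 : n₀⁻¹ * a = 1 := by
        have : n₀⁻¹ * a ∈ N ⊓ K := ⟨hzN, hzK⟩
        rwa [hdisj, Subgroup.mem_bot] at this
      have ha' : a = n₀ := by
        have := congrArg (n₀ * ·) h1; simpa [mul_assoc] using this
      have hb' : b = k₀ := by
        have h2 : k₀ * b⁻¹ = 1 := by rw [← hz, h1]
        have := congrArg (· * b) h2; simpa [mul_assoc] using this.symm
      exact hne (by simp [ha', hb'])
    · exact if_neg hc

/-- The value formula for `ψ ⋊ χ`: for `n ∈ N` and `h ∈ H`,
`(ψ ⋊ χ)(n h) = |K|⁻¹ ∑_{k ∈ H, k h k⁻¹ ∈ K} ψ(k n k⁻¹) χ(k h k⁻¹)`. -/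
theorem scr_value_formula (G : Type) [Group G] [Fintype G]
    (N H K : Subgroup G) [hN : N.Normal]
    (hinf : N ⊓ H = ⊥) (hsup : N ⊔ H = ⊤)
    (hab : ∀ a ∈ N, ∀ b ∈ N, a * b = b * a)
    (ψ χ : G → ℂ)
    (hψ1 : ψ 1 = 1) (hψm : ∀ a ∈ N, ∀ b ∈ N, ψ (a * b) = ψ a * ψ b)
    (hKH : K ≤ H)
    (hstab : ∀ k ∈ K, ∀ n ∈ N, ψ (k * n * k⁻¹) = ψ n)
    (hχ : ∃ V : FDRep ℂ ↥K, ∀ k : ↥K, χ ↑k = V.character k) :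
    ∀ n ∈ N, ∀ h ∈ H,
      scr N K ψ χ (n * h) = (Nat.card K : ℂ)⁻¹ *
        ∑ k : G, if k ∈ H ∧ k * h * k⁻¹ ∈ K then ψ (k * n * k⁻¹) * χ (k * h * k⁻¹) else 0 := by
  intro n hn h hh
  have hdisj : N ⊓ K = ⊥ := le_bot_iff.mp (hinf ▸ inf_le_inf_left N hKH)
  -- the bijection N × H ≃ G
  have hbij : Function.Bijective (fun p : N × H => (p.1 : G) * (p.2 : G)) := by
    constructor
    · rintro ⟨⟨a, ha⟩, ⟨b, hb⟩⟩ ⟨⟨c, hc⟩, ⟨d, hd⟩⟩ heq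
      simp only [Prod.mk.injEq, Subtype.mk.injEq] at heq ⊢
      have hz : c⁻¹ * a = d * b⁻¹ := by
        have h0 : c⁻¹ * (c * d) * b⁻¹ = c⁻¹ * (a * b) * b⁻¹ := by rw [heq]
        simpa [mul_assoc] using h0.symm
      have hzN : c⁻¹ * a ∈ N := N.mul_mem (N.inv_mem hc) ha
      have hzH : c⁻¹ * a ∈ H := by rw [hz]; exact H.mul_mem hd (H.inv_mem hb)
      have h1 : c⁻¹ * a = 1 := by
        have : c⁻¹ * a ∈ N ⊓ H := ⟨hzN, hzH⟩
        rwa [hinf, Subgroup.mem_bot] at this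
      constructor
      · have := congrArg (c * ·) h1; simpa [mul_assoc] using this
      · have h2 : d * b⁻¹ = 1 := by rw [← hz, h1]
        have := congrArg (· * b) h2
        simpa [mul_assoc] using this.symm
    · intro x
      have hx : x ∈ (N : Set G) * (H : Set G) := by
        rw [← Subgroup.normal_mul, hsup]; trivial
      obtain ⟨a, ha, b, hb, hab'⟩ := hx
      exact ⟨⟨⟨a, ha⟩, ⟨b, hb⟩⟩, hab'⟩
  let e : (N × H) ≃ G := Equiv.ofBijective _ hbij
  have hcardN : (Nat.card N : ℂ) ≠ 0 := by
    simp [Nat.card_eq_fintype_card, Fintype.card_ne_zero]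
  -- value of the inner double sum at x = m * y
  have hinner : ∀ (m : N) (y : H),
      (∑ n' : G, ∑ k' : G,
          if n' ∈ N ∧ k' ∈ K ∧ ((m : G) * y) * (n * h) * ((m : G) * y)⁻¹ = n' * k'
          then ψ n' * χ k' else 0)
        = (if (y : G) * h * (y : G)⁻¹ ∈ K
           then ψ ((y : G) * n * (y : G)⁻¹) * χ ((y : G) * h * (y : G)⁻¹) else 0) := by
    rintro ⟨m, hm⟩ ⟨y, hy⟩
    simp only
    set h' := y * h * y⁻¹ with hh'def
    have hn' : y * n * y⁻¹ ∈ N := hN.conj_mem n hn y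
    by_cases hcase : h' ∈ K
    · rw [if_pos hcase]
      set n₀ := m * (y * n * y⁻¹) * (h' * m⁻¹ * h'⁻¹) with hn₀def
      have hn₀ : n₀ ∈ N :=
        N.mul_mem (N.mul_mem hm hn') (hN.conj_mem m⁻¹ (N.inv_mem hm) h')
      have hdecomp : (m * y) * (n * h) * (m * y)⁻¹ = n₀ * h' := by
        rw [hn₀def, hh'def]; group
      rw [double_sum_single N K hdisj ψ χ _ n₀ h' hn₀ hcase hdecomp]
      have hψn₀ : ψ n₀ = ψ (y * n * y⁻¹) := by
        have h1 : ψ n₀ = ψ (m * (y * n * y⁻¹)) * ψ (h' * m⁻¹ * h'⁻¹) :=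
          hψm _ (N.mul_mem hm hn') _ (hN.conj_mem m⁻¹ (N.inv_mem hm) h')
        rw [h1, hstab h' hcase m⁻¹ (N.inv_mem hm), hψm m hm _ hn']
        have : ψ m * ψ m⁻¹ = 1 := by
          rw [← hψm m hm m⁻¹ (N.inv_mem hm)]; simp [hψ1]
        calc ψ m * ψ (y * n * y⁻¹) * ψ m⁻¹
            = ψ (y * n * y⁻¹) * (ψ m * ψ m⁻¹) := by ring
          _ = ψ (y * n * y⁻¹) := by rw [this, mul_one]
      rw [hψn₀]
    · rw [if_neg hcase]
      apply Finset.sum_eq_zero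
      intro n' _
      apply Finset.sum_eq_zero
      intro k' _
      by_cases hc : n' ∈ N ∧ k' ∈ K ∧ (m * y) * (n * h) * (m * y)⁻¹ = n' * k'
      · exfalso
        obtain ⟨hn'', hk'', hab''⟩ := hc
        set n₁ := m * (y * n * y⁻¹) * (h' * m⁻¹ * h'⁻¹) with hn₁def
        have hn₁ : n₁ ∈ N :=
          N.mul_mem (N.mul_mem hm hn') (hN.conj_mem m⁻¹ (N.inv_mem hm) h')
        have hdecomp : (m * y) * (n * h) * (m * y)⁻¹ = n₁ * h' := by
          rw [hn₁def, hh'def]; group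
        have heq : n₁ * h' = n' * k' := by rw [← hdecomp, hab'']
        have hz : n'⁻¹ * n₁ = k' * h'⁻¹ := by
          have h0 : n'⁻¹ * (n₁ * h') * h'⁻¹ = n'⁻¹ * (n' * k') * h'⁻¹ := by rw [heq]
          simpa [mul_assoc] using h0
        have hzN : n'⁻¹ * n₁ ∈ N := N.mul_mem (N.inv_mem hn'') hn₁
        have hzH : n'⁻¹ * n₁ ∈ H := by
          rw [hz]
          exact H.mul_mem (hKH hk'') (H.inv_mem (H.mul_mem (H.mul_mem hy hh) (H.inv_mem hy)))
        have h1 : n'⁻¹ * n₁ = 1 := by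
          have : n'⁻¹ * n₁ ∈ N ⊓ H := ⟨hzN, hzH⟩
          rwa [hinf, Subgroup.mem_bot] at this
        have h2 : k' = h' := by
          have h3 : k' * h'⁻¹ = 1 := by rw [← hz, h1]
          have := congrArg (· * h') h3; simpa [mul_assoc] using this
        exact hcase (h2 ▸ hk'')
      · exact if_neg hc
  -- rewrite LHS
  rw [scr]
  rw [← Equiv.sum_comp e (fun x => ∑ n' : G, ∑ k' : G,
      if n' ∈ N ∧ k' ∈ K ∧ x * (n * h) * x⁻¹ = n' * k' then ψ n' * χ k' else 0)]
  have he : ∀ p : N × H, e p = (p.1 : G) * (p.2 : G) := fun p => rfl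
  rw [Fintype.sum_prod_type]
  have hsum1 : ∀ m : N, (∑ y : H, ∑ n' : G, ∑ k' : G,
      if n' ∈ N ∧ k' ∈ K ∧ (e (m, y)) * (n * h) * (e (m, y))⁻¹ = n' * k'
      then ψ n' * χ k' else 0)
      = ∑ y : H, (if (y : G) * h * (y : G)⁻¹ ∈ K
          then ψ ((y : G) * n * (y : G)⁻¹) * χ ((y : G) * h * (y : G)⁻¹) else 0) := by
    intro m
    apply Finset.sum_congr rfl
    intro y _
    rw [he]
    exact hinner m y
  rw [Finset.sum_congr rfl (fun m _ => hsum1 m)]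
  rw [Finset.sum_const, Finset.card_univ]
  -- rewrite RHS sum over G as sum over H
  have hRHS : (∑ k : G, if k ∈ H ∧ k * h * k⁻¹ ∈ K
        then ψ (k * n * k⁻¹) * χ (k * h * k⁻¹) else 0)
      = ∑ y : H, (if (y : G) * h * (y : G)⁻¹ ∈ K
          then ψ ((y : G) * n * (y : G)⁻¹) * χ ((y : G) * h * (y : G)⁻¹) else 0) := by
    rw [← Finset.sum_filter_add_sum_filter_not Finset.univ (· ∈ H)]
    have h2 : ∑ k ∈ Finset.univ.filter (fun k => ¬ k ∈ H),
        (if k ∈ H ∧ k * h * k⁻¹ ∈ K then ψ (k * n * k⁻¹) * χ (k * h * k⁻¹) else 0) = 0 := by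
      apply Finset.sum_eq_zero
      intro k hk
      simp only [Finset.mem_filter] at hk
      simp [hk.2]
    rw [h2, add_zero]
    rw [Finset.sum_subtype (p := (· ∈ H)) (Finset.univ.filter (· ∈ H)) (by simp) (fun k =>
      if k ∈ H ∧ k * h * k⁻¹ ∈ K then ψ (k * n * k⁻¹) * χ (k * h * k⁻¹) else 0)]
    apply Finset.sum_congr rfl
    intro y _
    simp [y.2]
  rw [hRHS]
  rw [nsmul_eq_mul, ← mul_assoc]
  congr 1
  rw [Nat.card_eq_fintype_card]
  field_simp
end
end

section
/- Let G = N ⋊ H with N abelian, ψ a linear character of N, and K₁ ⊆ K₂ ⊆ I_H(ψ) subgroups of H. For a character χ of K₁, one has ψ ⋊ Ind_{K₁}^{K₂}(χ) = ψ ⋊ χ as class functions on G. -/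
open scoped Classical

noncomputable section

/-- Auxiliary: move the innermost of four sums to the outside. -/
lemma sum_comm4_aux {α : Type} [Fintype α] (F : α → α → α → α → ℂ) :
    (∑ x : α, ∑ n : α, ∑ k : α, ∑ y : α, F x n k y)
      = ∑ y : α, ∑ x : α, ∑ n : α, ∑ k : α, F x n k y := by
  rw [show (∑ x : α, ∑ n : α, ∑ k : α, ∑ y : α, F x n k y)
        = ∑ x : α, ∑ n : α, ∑ y : α, ∑ k : α, F x n k y from
      Finset.sum_congr rfl fun x _ => Finset.sum_congr rfl fun n _ => Finset.sum_comm,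
     show (∑ x : α, ∑ n : α, ∑ y : α, ∑ k : α, F x n k y)
        = ∑ x : α, ∑ y : α, ∑ n : α, ∑ k : α, F x n k y from
      Finset.sum_congr rfl fun x _ => Finset.sum_comm,
     Finset.sum_comm]

/-- `ψ ⋊ Ind_{K₁}^{K₂}(χ) = ψ ⋊ χ` for `K₁ ⊆ K₂ ⊆ I_H(ψ)`. -/
theorem scr_ind_eq (G : Type) [Group G] [Fintype G]
    (N H K₁ K₂ : Subgroup G) [hN : N.Normal]
    (hinf : N ⊓ H = ⊥) (hsup : N ⊔ H = ⊤)
    (hab : ∀ a ∈ N, ∀ b ∈ N, a * b = b * a)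
    (ψ χ : G → ℂ)
    (hψ1 : ψ 1 = 1) (hψm : ∀ a ∈ N, ∀ b ∈ N, ψ (a * b) = ψ a * ψ b)
    (hK12 : K₁ ≤ K₂) (hKH : K₂ ≤ H)
    (hstab : ∀ k ∈ K₂, ∀ n ∈ N, ψ (k * n * k⁻¹) = ψ n)
    (hχ : ∃ V : FDRep ℂ ↥K₁, ∀ k : ↥K₁, χ ↑k = V.character k) :
    scr N K₂ ψ (indOn K₁ K₂ χ) = scr N K₁ ψ χ := by
  classical
  funext g
  simp only [scr, indOn]
  have hcN : (Nat.card N : ℂ) ≠ 0 := Nat.cast_ne_zero.mpr Nat.card_pos.ne'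
  have hc1 : (Nat.card K₁ : ℂ) ≠ 0 := Nat.cast_ne_zero.mpr Nat.card_pos.ne'
  have hc2 : (Nat.card K₂ : ℂ) ≠ 0 := Nat.cast_ne_zero.mpr Nat.card_pos.ne'
  have key : ∀ x n k : G, (if n ∈ N ∧ k ∈ K₂ ∧ x * g * x⁻¹ = n * k then
        ψ n * (if k ∈ K₂ then (Nat.card K₁ : ℂ)⁻¹ *
          ∑ y : G, if y ∈ K₂ ∧ y * k * y⁻¹ ∈ K₁ then χ (y * k * y⁻¹) else 0 else 0) else 0)
      = (Nat.card K₁ : ℂ)⁻¹ * ∑ y : G,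
          if (y ∈ K₂ ∧ y * k * y⁻¹ ∈ K₁) ∧ n ∈ N ∧ k ∈ K₂ ∧ x * g * x⁻¹ = n * k
            then ψ n * χ (y * k * y⁻¹) else 0 := by
    intro x n k
    by_cases h : n ∈ N ∧ k ∈ K₂ ∧ x * g * x⁻¹ = n * k
    · rw [if_pos h, if_pos h.2.1, mul_left_comm, Finset.mul_sum]
      congr 1
      refine Finset.sum_congr rfl fun y _ => ?_
      by_cases hy : y ∈ K₂ ∧ y * k * y⁻¹ ∈ K₁
      · rw [if_pos hy, if_pos ⟨hy, h⟩]
      · rw [if_neg hy, mul_zero, if_neg fun hc => hy hc.1]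
    · rw [if_neg h, eq_comm,
        Finset.sum_eq_zero fun y _ => if_neg fun hc => h hc.2, mul_zero]
  simp only [key]
  simp only [← Finset.mul_sum]
  rw [sum_comm4_aux]
  have hy' : ∀ y : G, (∑ x : G, ∑ n : G, ∑ k : G,
      if (y ∈ K₂ ∧ y * k * y⁻¹ ∈ K₁) ∧ n ∈ N ∧ k ∈ K₂ ∧ x * g * x⁻¹ = n * k
        then ψ n * χ (y * k * y⁻¹) else 0)
      = if y ∈ K₂ then (∑ x : G, ∑ n : G, ∑ k : G,
          if n ∈ N ∧ k ∈ K₁ ∧ x * g * x⁻¹ = n * k then ψ n * χ k else 0) else 0 := by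
    intro y
    by_cases hy : y ∈ K₂
    · rw [if_pos hy]
      refine Fintype.sum_equiv (Equiv.mulLeft y) _ _ fun x => ?_
      refine Fintype.sum_equiv (MulAut.conj y).toEquiv _ _ fun n => ?_
      refine Fintype.sum_equiv (MulAut.conj y).toEquiv _ _ fun k => ?_
      simp only [Equiv.coe_mulLeft, MulEquiv.toEquiv_eq_coe, EquivLike.coe_coe, MulEquiv.coe_toEquiv, MulAut.conj_apply]
      by_cases hc : (y ∈ K₂ ∧ y * k * y⁻¹ ∈ K₁) ∧ n ∈ N ∧ k ∈ K₂ ∧ x * g * x⁻¹ = n * k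
      · rw [if_pos hc]; refine ((if_pos ?_).trans ?_).symm
        swap; · rw [hstab y hy n hc.2.1]
        refine ⟨hN.conj_mem n hc.2.1 y, hc.1.2, ?_⟩
        have h1 : y * x * g * (y * x)⁻¹ = y * (x * g * x⁻¹) * y⁻¹ := by group
        rw [h1, hc.2.2.2]; group
      · rw [if_neg hc]; refine (if_neg ?_).symm
        intro hc'
        refine hc ⟨⟨hy, hc'.2.1⟩, ?_, ?_, ?_⟩
        · have h2 := hN.conj_mem _ hc'.1 y⁻¹
          have h3 : y⁻¹ * (y * n * y⁻¹) * y⁻¹⁻¹ = n := by group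
          rwa [h3] at h2
        · have h4 : k = y⁻¹ * (y * k * y⁻¹) * y := by group
          rw [h4]
          exact mul_mem (mul_mem (inv_mem hy) (hK12 hc'.2.1)) hy
        · have h5 : x * g * x⁻¹ = y⁻¹ * (y * x * g * (y * x)⁻¹) * y := by group
          rw [h5, hc'.2.2]; group
    · rw [if_neg hy]
      exact Finset.sum_eq_zero fun x _ => Finset.sum_eq_zero fun n _ =>
        Finset.sum_eq_zero fun k _ => if_neg fun hc => hy hc.1.1
  simp only [hy']
  rw [Finset.sum_ite, Finset.sum_const, Finset.sum_const_zero, add_zero, nsmul_eq_mul]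
  have hcard : ((Finset.univ.filter fun y : G => y ∈ K₂).card : ℂ) = (Nat.card K₂ : ℂ) := by
    rw [Nat.card_eq_fintype_card, Fintype.card_subtype]
  rw [hcard]
  field_simp
end
end

section
/- Let H and K be subgroups of a finite group G, let χ be a character of H and ψ a character of K, and let X be a set of representatives for the (H,K) double cosets of G. Then Ind_H^G(χ) · Ind_K^G(ψ) = Σ_{x ∈ X} Ind_{H^x ∩ K}^G( Res_{H^x ∩ K}^{H^x}(χ^x) · Res_{H^x ∩ K}^K(ψ) ), where H^x = x⁻¹Hx and χ^x(g) = χ(x g x⁻¹). -/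
open scoped Classical

noncomputable section

private lemma ite_sum_zero {α : Type} (s : Finset α) (P : Prop) [Decidable P] (f : α → ℂ) :
    (if P then ∑ t ∈ s, f t else 0) = ∑ t ∈ s, if P then f t else 0 := by
  by_cases h : P
  · simp [h]
  · simp [h]

private lemma sum_ind_const {G : Type} [Group G] [Fintype G] (H : Subgroup G) (c : ℂ) :
    (∑ h : G, if h ∈ H then c else 0) = (Nat.card H : ℂ) * c := by
  rw [Finset.sum_ite, Finset.sum_const, Finset.sum_const_zero, add_zero, nsmul_eq_mul]
  congr 1
  rw [Nat.card_eq_fintype_card]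
  norm_cast
  rw [← Fintype.card_subtype]

private lemma conj_mem_iff {G : Type} [Group G] (H : Subgroup G) {u : G} (hu : u ∈ H) (a : G) :
    u * a * u⁻¹ ∈ H ↔ a ∈ H := by
  constructor
  · intro h
    have := H.mul_mem (H.mul_mem (H.inv_mem hu) h) hu
    simpa [mul_assoc] using this
  · intro h; exact H.mul_mem (H.mul_mem hu h) (H.inv_mem hu)

private lemma mem_conjmap {G : Type} [Group G] (H : Subgroup G) (x l : G) :
    l ∈ H.map (MulAut.conj x⁻¹).toMonoidHom ↔ x * l * x⁻¹ ∈ H := by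
  rw [Subgroup.mem_map]
  constructor
  · rintro ⟨h, hh, rfl⟩
    simpa [MulAut.conj_apply, mul_assoc] using hh
  · intro hm
    exact ⟨x * l * x⁻¹, hm, by simp [MulAut.conj_apply]; group⟩

private lemma count_lemma {G : Type} [Group G] [Fintype G] (H K : Subgroup G) (x t : G) :
    (∑ h : G, ∑ k : G, if h ∈ H ∧ k ∈ K ∧ h * x * k = t then (1:ℂ) else 0) =
      if ∃ h ∈ H, ∃ k ∈ K, t = h * x * k
      then (Nat.card ↥((H.map (MulAut.conj x⁻¹).toMonoidHom) ⊓ K) : ℂ) else 0 := by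
  by_cases hex : ∃ h ∈ H, ∃ k ∈ K, t = h * x * k
  · rw [if_pos hex]
    obtain ⟨h₀, hh₀, k₀, hk₀, rfl⟩ := hex
    rw [← Finset.sum_product']
    rw [Finset.sum_boole]
    rw [Nat.card_eq_fintype_card, Fintype.card_subtype]
    norm_cast
    apply Finset.card_bij (fun (p : G × G) _ => k₀ * p.2⁻¹)
    · rintro ⟨h, k⟩ hp
      simp only [Finset.mem_filter, Finset.mem_univ, Finset.mem_product, true_and] at hp ⊢
      obtain ⟨hh, hk, heq⟩ := hp
      have hxk : x * (k₀ * k⁻¹) * x⁻¹ = h₀⁻¹ * h := by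
        rw [show h = h₀ * x * k₀ * k⁻¹ * x⁻¹ from by rw [← heq]; group]
        group
      refine Subgroup.mem_inf.mpr ⟨(mem_conjmap H x _).mpr ?_, K.mul_mem hk₀ (K.inv_mem hk)⟩
      rw [hxk]; exact H.mul_mem (H.inv_mem hh₀) hh
    · rintro ⟨h, k⟩ hp ⟨h', k'⟩ hp' he
      simp only [Finset.mem_filter, Finset.mem_univ, Finset.mem_product, true_and] at hp hp'
      have hk2 : k = k' := inv_injective (mul_left_cancel he)
      have h3 : h * x * k = h' * x * k' := hp.2.2.trans hp'.2.2.symm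
      rw [hk2] at h3
      have h4 : h = h' := mul_right_cancel (mul_right_cancel h3)
      exact Prod.ext h4 hk2
    · intro l hl
      simp only [Finset.mem_filter, Finset.mem_univ, true_and] at hl
      obtain ⟨hl1, hl2⟩ := Subgroup.mem_inf.mp hl
      refine ⟨(h₀ * (x * l * x⁻¹), l⁻¹ * k₀), ?_, by group⟩
      simp only [Finset.mem_filter, Finset.mem_univ, Finset.mem_product, true_and]
      exact ⟨H.mul_mem hh₀ ((mem_conjmap H x l).mp hl1), K.mul_mem (K.inv_mem hl2) hk₀, by group⟩
  · rw [if_neg hex]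
    apply Finset.sum_eq_zero; intro h _
    apply Finset.sum_eq_zero; intro k _
    rw [if_neg]
    rintro ⟨hh, hk, heq⟩
    exact hex ⟨h, hh, k, hk, heq.symm⟩

/-- Key double-coset partition of a full sum. -/
private lemma key_partition {G : Type} [Group G] [Fintype G] (H K : Subgroup G)
    (X : Finset G)
    (hX : ∀ g : G, ∃! x, x ∈ X ∧ ∃ h ∈ H, ∃ k ∈ K, g = h * x * k)
    (Φ : G → ℂ) :
    ∑ t : G, Φ t =
      ∑ x ∈ X, (Nat.card ↥((H.map (MulAut.conj x⁻¹).toMonoidHom) ⊓ K) : ℂ)⁻¹ *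
        ∑ h : G, ∑ k : G, if h ∈ H ∧ k ∈ K then Φ (h * x * k) else 0 := by
  have cLpos : ∀ x : G, (Nat.card ↥((H.map (MulAut.conj x⁻¹).toMonoidHom) ⊓ K) : ℂ) ≠ 0 := by
    intro x
    exact Nat.cast_ne_zero.mpr Nat.card_pos.ne'
  have inner : ∀ x : G,
      (∑ h : G, ∑ k : G, if h ∈ H ∧ k ∈ K then Φ (h * x * k) else 0) =
      ∑ t : G, (if ∃ h ∈ H, ∃ k ∈ K, t = h * x * k
        then (Nat.card ↥((H.map (MulAut.conj x⁻¹).toMonoidHom) ⊓ K) : ℂ) else 0) * Φ t := by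
    intro x
    have step1 : ∀ h k : G,
        (if h ∈ H ∧ k ∈ K then Φ (h * x * k) else 0) =
        ∑ t : G, if h ∈ H ∧ k ∈ K ∧ h * x * k = t then (1:ℂ) * Φ t else 0 := by
      intro h k
      rw [show (if h ∈ H ∧ k ∈ K then Φ (h * x * k) else 0)
          = (if h ∈ H ∧ k ∈ K then ∑ t : G, if h * x * k = t then Φ t else 0 else 0) from by
        rw [Finset.sum_ite_eq]; simp]
      rw [ite_sum_zero]
      apply Finset.sum_congr rfl
      intro t _
      by_cases h1 : h ∈ H ∧ k ∈ K <;> by_cases h2 : h * x * k = t <;>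
        simp [h1, h2, and_assoc]
    calc (∑ h : G, ∑ k : G, if h ∈ H ∧ k ∈ K then Φ (h * x * k) else 0)
        = ∑ h : G, ∑ k : G, ∑ t : G,
            if h ∈ H ∧ k ∈ K ∧ h * x * k = t then (1:ℂ) * Φ t else 0 := by
          apply Finset.sum_congr rfl; intro h _
          apply Finset.sum_congr rfl; intro k _
          exact step1 h k
      _ = ∑ t : G, ∑ h : G, ∑ k : G,
            if h ∈ H ∧ k ∈ K ∧ h * x * k = t then (1:ℂ) * Φ t else 0 := by
          rw [show (∑ h : G, ∑ k : G, ∑ t : G,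
              if h ∈ H ∧ k ∈ K ∧ h * x * k = t then (1:ℂ) * Φ t else 0)
            = ∑ h : G, ∑ t : G, ∑ k : G,
              if h ∈ H ∧ k ∈ K ∧ h * x * k = t then (1:ℂ) * Φ t else 0 from
            Finset.sum_congr rfl fun h _ => Finset.sum_comm]
          exact Finset.sum_comm
      _ = ∑ t : G, (∑ h : G, ∑ k : G,
            if h ∈ H ∧ k ∈ K ∧ h * x * k = t then (1:ℂ) else 0) * Φ t := by
          apply Finset.sum_congr rfl; intro t _
          rw [Finset.sum_mul]
          apply Finset.sum_congr rfl; intro h _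
          rw [Finset.sum_mul]
          apply Finset.sum_congr rfl; intro k _
          by_cases hc : h ∈ H ∧ k ∈ K ∧ h * x * k = t <;> simp [hc]
      _ = _ := by
          apply Finset.sum_congr rfl; intro t _
          rw [count_lemma]
  calc ∑ t : G, Φ t
      = ∑ t : G, ∑ x ∈ X, (if ∃ h ∈ H, ∃ k ∈ K, t = h * x * k then Φ t else 0) := by
        apply Finset.sum_congr rfl; intro t _
        obtain ⟨x₀, ⟨hx₀X, hx₀⟩, huniq⟩ := hX t
        rw [Finset.sum_eq_single x₀]
        · rw [if_pos hx₀]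
        · intro b hb hne
          rw [if_neg]
          intro hex
          exact hne (huniq b ⟨hb, hex⟩)
        · intro habs; exact absurd hx₀X habs
    _ = ∑ x ∈ X, ∑ t : G, (if ∃ h ∈ H, ∃ k ∈ K, t = h * x * k then Φ t else 0) :=
        Finset.sum_comm
    _ = _ := by
        apply Finset.sum_congr rfl; intro x _
        rw [inner, Finset.mul_sum]
        apply Finset.sum_congr rfl; intro t _
        by_cases hc : ∃ h ∈ H, ∃ k ∈ K, t = h * x * k
        · rw [if_pos hc, if_pos hc, ← mul_assoc, inv_mul_cancel₀ (cLpos x), one_mul]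
        · simp [hc]

set_option maxHeartbeats 2000000 in
/-- Mackey's formula for a product of induced characters:
`Ind_H^G(χ) · Ind_K^G(ψ) = ∑_{x ∈ X} Ind_{H^x ∩ K}^G (Res(χ^x) · Res(ψ))`,
where `X` is a set of `(H,K)` double coset representatives, `H^x = x⁻¹ H x`, and
`χ^x(g) = χ (x g x⁻¹)`. -/
theorem mackey_product_of_induced (G : Type) [Group G] [Fintype G]
    (H K : Subgroup G) (χ ψ : G → ℂ)
    (hχ : ∃ V : FDRep ℂ ↥H, ∀ h : ↥H, χ ↑h = V.character h)
    (hψ : ∃ V : FDRep ℂ ↥K, ∀ k : ↥K, ψ ↑k = V.character k)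
    (X : Finset G)
    (hX : ∀ g : G, ∃! x, x ∈ X ∧ ∃ h ∈ H, ∃ k ∈ K, g = h * x * k) :
    ∀ g : G,
      indOn H ⊤ χ g * indOn K ⊤ ψ g =
        ∑ x ∈ X, indOn ((H.map (MulAut.conj x⁻¹).toMonoidHom) ⊓ K) ⊤
          (fun y => χ (x * y * x⁻¹) * ψ y) g := by
  have hχc : ∀ u a : G, u ∈ H → a ∈ H → χ (u * a * u⁻¹) = χ a := by
    obtain ⟨V, hV⟩ := hχ
    intro u a hu ha
    have h1 : χ (u * a * u⁻¹)
        = V.character ((⟨u, hu⟩ : H) * ⟨a, ha⟩ * (⟨u, hu⟩ : H)⁻¹) :=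
      hV ((⟨u, hu⟩ : H) * ⟨a, ha⟩ * (⟨u, hu⟩ : H)⁻¹)
    rw [h1, FDRep.char_conj, ← hV]
  have hψc : ∀ u a : G, u ∈ K → a ∈ K → ψ (u * a * u⁻¹) = ψ a := by
    obtain ⟨V, hV⟩ := hψ
    intro u a hu ha
    have h1 : ψ (u * a * u⁻¹)
        = V.character ((⟨u, hu⟩ : K) * ⟨a, ha⟩ * (⟨u, hu⟩ : K)⁻¹) :=
      hV ((⟨u, hu⟩ : K) * ⟨a, ha⟩ * (⟨u, hu⟩ : K)⁻¹)
    rw [h1, FDRep.char_conj, ← hV]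
  intro g
  have hcH : (Nat.card H : ℂ) ≠ 0 := Nat.cast_ne_zero.mpr Nat.card_pos.ne'
  have hcK : (Nat.card K : ℂ) ≠ 0 := Nat.cast_ne_zero.mpr Nat.card_pos.ne'
  have stepA : (∑ a : G, if a * g * a⁻¹ ∈ H then χ (a * g * a⁻¹) else 0) *
      (∑ b : G, if b * g * b⁻¹ ∈ K then ψ (b * g * b⁻¹) else 0) =
      ∑ t : G, ∑ b : G,
        if t * (b * g * b⁻¹) * t⁻¹ ∈ H ∧ b * g * b⁻¹ ∈ K
        then χ (t * (b * g * b⁻¹) * t⁻¹) * ψ (b * g * b⁻¹) else 0 := by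
    calc (∑ a : G, if a * g * a⁻¹ ∈ H then χ (a * g * a⁻¹) else 0) *
        (∑ b : G, if b * g * b⁻¹ ∈ K then ψ (b * g * b⁻¹) else 0)
        = ∑ a : G, ∑ b : G,
            (if a * g * a⁻¹ ∈ H then χ (a * g * a⁻¹) else 0) *
            (if b * g * b⁻¹ ∈ K then ψ (b * g * b⁻¹) else 0) := by
          rw [Finset.sum_mul_sum]
      _ = ∑ b : G, ∑ a : G,
            (if a * g * a⁻¹ ∈ H then χ (a * g * a⁻¹) else 0) *
            (if b * g * b⁻¹ ∈ K then ψ (b * g * b⁻¹) else 0) := Finset.sum_comm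
      _ = ∑ b : G, ∑ t : G,
            (if (t * b) * g * (t * b)⁻¹ ∈ H then χ ((t * b) * g * (t * b)⁻¹) else 0) *
            (if b * g * b⁻¹ ∈ K then ψ (b * g * b⁻¹) else 0) := by
          apply Finset.sum_congr rfl; intro b _
          exact (Fintype.sum_equiv (Equiv.mulRight b) _ _ (fun t => rfl)).symm
      _ = ∑ t : G, ∑ b : G,
            (if (t * b) * g * (t * b)⁻¹ ∈ H then χ ((t * b) * g * (t * b)⁻¹) else 0) *
            (if b * g * b⁻¹ ∈ K then ψ (b * g * b⁻¹) else 0) := Finset.sum_comm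
      _ = _ := by
          apply Finset.sum_congr rfl; intro t _
          apply Finset.sum_congr rfl; intro b _
          rw [show (t * b) * g * (t * b)⁻¹ = t * (b * g * b⁻¹) * t⁻¹ from by group]
          by_cases h1 : t * (b * g * b⁻¹) * t⁻¹ ∈ H <;>
            by_cases h2 : b * g * b⁻¹ ∈ K <;> simp [h1, h2]
  have stepC : ∀ x : G,
      (∑ h : G, ∑ k : G, if h ∈ H ∧ k ∈ K then
        (∑ b : G, if (h * x * k) * (b * g * b⁻¹) * (h * x * k)⁻¹ ∈ H ∧ b * g * b⁻¹ ∈ K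
          then χ ((h * x * k) * (b * g * b⁻¹) * (h * x * k)⁻¹) * ψ (b * g * b⁻¹) else 0)
        else 0)
      = (Nat.card H : ℂ) * ((Nat.card K : ℂ) *
        ∑ y : G, if y * g * y⁻¹ ∈ (H.map (MulAut.conj x⁻¹).toMonoidHom) ⊓ K
          then χ (x * (y * g * y⁻¹) * x⁻¹) * ψ (y * g * y⁻¹) else 0) := by
    intro x
    have hsum : ∀ h k : G, h ∈ H → k ∈ K →
        (∑ b : G, if (h * x * k) * (b * g * b⁻¹) * (h * x * k)⁻¹ ∈ H ∧ b * g * b⁻¹ ∈ K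
          then χ ((h * x * k) * (b * g * b⁻¹) * (h * x * k)⁻¹) * ψ (b * g * b⁻¹) else 0)
        = ∑ y : G, if y * g * y⁻¹ ∈ (H.map (MulAut.conj x⁻¹).toMonoidHom) ⊓ K
          then χ (x * (y * g * y⁻¹) * x⁻¹) * ψ (y * g * y⁻¹) else 0 := by
      intro h k hh hk
      refine (Fintype.sum_equiv (Equiv.mulLeft k⁻¹) _ _ ?_).symm
      intro y
      show (if y * g * y⁻¹ ∈ (H.map (MulAut.conj x⁻¹).toMonoidHom) ⊓ K
          then χ (x * (y * g * y⁻¹) * x⁻¹) * ψ (y * g * y⁻¹) else 0)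
        = if (h * x * k) * ((k⁻¹ * y) * g * (k⁻¹ * y)⁻¹) * (h * x * k)⁻¹ ∈ H ∧
            (k⁻¹ * y) * g * (k⁻¹ * y)⁻¹ ∈ K
          then χ ((h * x * k) * ((k⁻¹ * y) * g * (k⁻¹ * y)⁻¹) * (h * x * k)⁻¹) *
            ψ ((k⁻¹ * y) * g * (k⁻¹ * y)⁻¹) else 0
      rw [show (k⁻¹ * y) * g * (k⁻¹ * y)⁻¹ = k⁻¹ * (y * g * y⁻¹) * k from by group]
      rw [show (h * x * k) * (k⁻¹ * (y * g * y⁻¹) * k) * (h * x * k)⁻¹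
          = h * (x * (y * g * y⁻¹) * x⁻¹) * h⁻¹ from by group]
      by_cases hd : y * g * y⁻¹ ∈ (H.map (MulAut.conj x⁻¹).toMonoidHom) ⊓ K
      · obtain ⟨hd1, hd2⟩ := Subgroup.mem_inf.mp hd
        have hdH : x * (y * g * y⁻¹) * x⁻¹ ∈ H := (mem_conjmap H x _).mp hd1
        have hkd : k⁻¹ * (y * g * y⁻¹) * k ∈ K := by
          have := (conj_mem_iff K (K.inv_mem hk) (y * g * y⁻¹)).mpr hd2
          simpa using this
        rw [if_pos hd, if_pos ⟨(conj_mem_iff H hh _).mpr hdH, hkd⟩]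
        rw [hχc h _ hh hdH]
        have hψeq : ψ (k⁻¹ * (y * g * y⁻¹) * k⁻¹⁻¹) = ψ (y * g * y⁻¹) :=
          hψc k⁻¹ (y * g * y⁻¹) (K.inv_mem hk) hd2
        rw [show k⁻¹ * (y * g * y⁻¹) * k = k⁻¹ * (y * g * y⁻¹) * k⁻¹⁻¹ from by
          rw [inv_inv], hψeq]
      · rw [if_neg hd, if_neg]
        rintro ⟨c1, c2⟩
        apply hd
        refine Subgroup.mem_inf.mpr
          ⟨(mem_conjmap H x _).mpr ((conj_mem_iff H hh _).mp c1), ?_⟩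
        have c2' : k⁻¹ * (y * g * y⁻¹) * k⁻¹⁻¹ ∈ K := by simpa using c2
        exact (conj_mem_iff K (K.inv_mem hk) _).mp c2'
    calc (∑ h : G, ∑ k : G, if h ∈ H ∧ k ∈ K then
        (∑ b : G, if (h * x * k) * (b * g * b⁻¹) * (h * x * k)⁻¹ ∈ H ∧ b * g * b⁻¹ ∈ K
          then χ ((h * x * k) * (b * g * b⁻¹) * (h * x * k)⁻¹) * ψ (b * g * b⁻¹) else 0)
        else 0)
        = ∑ h : G, ∑ k : G, if h ∈ H ∧ k ∈ K then
            (∑ y : G, if y * g * y⁻¹ ∈ (H.map (MulAut.conj x⁻¹).toMonoidHom) ⊓ K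
              then χ (x * (y * g * y⁻¹) * x⁻¹) * ψ (y * g * y⁻¹) else 0) else 0 := by
          apply Finset.sum_congr rfl; intro h _
          apply Finset.sum_congr rfl; intro k _
          by_cases hc : h ∈ H ∧ k ∈ K
          · rw [if_pos hc, if_pos hc, hsum h k hc.1 hc.2]
          · rw [if_neg hc, if_neg hc]
      _ = ∑ h : G, if h ∈ H then (∑ k : G, if k ∈ K then
            (∑ y : G, if y * g * y⁻¹ ∈ (H.map (MulAut.conj x⁻¹).toMonoidHom) ⊓ K
              then χ (x * (y * g * y⁻¹) * x⁻¹) * ψ (y * g * y⁻¹) else 0) else 0)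
            else 0 := by
          apply Finset.sum_congr rfl; intro h _
          rw [ite_sum_zero]
          apply Finset.sum_congr rfl; intro k _
          by_cases h1 : h ∈ H <;> by_cases h2 : k ∈ K <;> simp [h1, h2]
      _ = _ := by
          simp only [sum_ind_const]
  simp only [indOn, Subgroup.mem_top, if_true, true_and]
  rw [show ((Nat.card H : ℂ)⁻¹ *
        ∑ a : G, if a * g * a⁻¹ ∈ H then χ (a * g * a⁻¹) else 0) *
      ((Nat.card K : ℂ)⁻¹ *
        ∑ b : G, if b * g * b⁻¹ ∈ K then ψ (b * g * b⁻¹) else 0)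
      = (Nat.card H : ℂ)⁻¹ * (Nat.card K : ℂ)⁻¹ *
        ((∑ a : G, if a * g * a⁻¹ ∈ H then χ (a * g * a⁻¹) else 0) *
         (∑ b : G, if b * g * b⁻¹ ∈ K then ψ (b * g * b⁻¹) else 0)) from by ring]
  rw [stepA]
  rw [key_partition H K X hX (fun t => ∑ b : G,
    if t * (b * g * b⁻¹) * t⁻¹ ∈ H ∧ b * g * b⁻¹ ∈ K
    then χ (t * (b * g * b⁻¹) * t⁻¹) * ψ (b * g * b⁻¹) else 0)]
  rw [Finset.mul_sum]
  apply Finset.sum_congr rfl; intro x _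
  have hbeta : (∑ h : G, ∑ k : G, if h ∈ H ∧ k ∈ K then
      (fun t => ∑ b : G, if t * (b * g * b⁻¹) * t⁻¹ ∈ H ∧ b * g * b⁻¹ ∈ K
        then χ (t * (b * g * b⁻¹) * t⁻¹) * ψ (b * g * b⁻¹) else 0) (h * x * k) else 0)
      = (∑ h : G, ∑ k : G, if h ∈ H ∧ k ∈ K then
      (∑ b : G, if (h * x * k) * (b * g * b⁻¹) * (h * x * k)⁻¹ ∈ H ∧ b * g * b⁻¹ ∈ K
        then χ ((h * x * k) * (b * g * b⁻¹) * (h * x * k)⁻¹) * ψ (b * g * b⁻¹) else 0)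
      else 0) := rfl
  rw [hbeta, stepC x]
  have hcL : (Nat.card ↥((H.map (MulAut.conj x⁻¹).toMonoidHom) ⊓ K) : ℂ) ≠ 0 :=
    Nat.cast_ne_zero.mpr Nat.card_pos.ne'
  have habc : ∀ (a b c S : ℂ), a ≠ 0 → b ≠ 0 →
      a⁻¹ * b⁻¹ * (c * (a * (b * S))) = c * S := by
    intro a b c S ha hb
    field_simp
  exact habc _ _ _ _ hcH hcK
end
end

section
/- Let G = N ⋊ H with N abelian, let ψ₁, ψ₂ be linear characters of N, let χᵢ be a character of Kᵢ ⊆ I_H(ψᵢ) for i = 1,2, and let X be a set of (K₁,K₂) double coset representatives of H. Then (ψ₁ ⋊ χ₁)(ψ₂ ⋊ χ₂) = Σ_{x ∈ X} (ψ₁^x ψ₂) ⋊ ( Res_{K₁^x ∩ K₂}^{K₁^x}(χ₁^x) · Res_{K₁^x ∩ K₂}^{K₂}(χ₂) ). -/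
open scoped Classical

noncomputable section

lemma sum_subgroup_const {G : Type} [Group G] [Fintype G] (N : Subgroup G) (c : ℂ) :
    ∑ n : G, (if n ∈ N then c else 0) = (Nat.card N : ℂ) * c := by
  rw [← Finset.sum_filter, Finset.sum_const, nsmul_eq_mul]
  congr 1
  rw [Nat.card_eq_fintype_card]
  exact_mod_cast (Fintype.card_subtype _).symm

lemma fact_unique {G : Type} [Group G] {N H : Subgroup G} (hinf : N ⊓ H = ⊥)
    {n₁ h₁ n₂ h₂ : G} (hn₁ : n₁ ∈ N) (hh₁ : h₁ ∈ H) (hn₂ : n₂ ∈ N) (hh₂ : h₂ ∈ H)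
    (h : n₁ * h₁ = n₂ * h₂) : n₁ = n₂ ∧ h₁ = h₂ := by
  have key : n₂⁻¹ * n₁ = h₂ * h₁⁻¹ := by
    have h2 : n₂⁻¹ * (n₁ * h₁) * h₁⁻¹ = n₂⁻¹ * (n₂ * h₂) * h₁⁻¹ := by rw [h]
    simpa [mul_assoc] using h2
  have h1 : n₂⁻¹ * n₁ ∈ N ⊓ H := by
    refine Subgroup.mem_inf.mpr ⟨mul_mem (inv_mem hn₂) hn₁, ?_⟩
    rw [key]; exact mul_mem hh₂ (inv_mem hh₁)
  rw [hinf, Subgroup.mem_bot, inv_mul_eq_one] at h1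
  refine ⟨h1.symm, ?_⟩
  have := key
  rw [← h1, inv_mul_cancel] at this
  rw [eq_comm, ← mul_inv_eq_one, this]

lemma fact_exists {G : Type} [Group G] {N H : Subgroup G} [N.Normal] (hsup : N ⊔ H = ⊤)
    (g : G) : ∃ n ∈ N, ∃ h ∈ H, g = n * h := by
  have hg : g ∈ (↑(N ⊔ H) : Set G) := by rw [hsup]; trivial
  rw [Subgroup.normal_mul] at hg
  obtain ⟨n, hn, h, hh, he⟩ := hg
  exact ⟨n, hn, h, hh, he.symm⟩

lemma sum_factor {G : Type} [Group G] [Fintype G] {N H : Subgroup G} [N.Normal]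
    (hinf : N ⊓ H = ⊥) (hsup : N ⊔ H = ⊤) (f : G → ℂ) :
    ∑ t : G, f t = ∑ n : G, ∑ h : G, if n ∈ N ∧ h ∈ H then f (n * h) else 0 := by
  have e1 : (∑ n : G, ∑ h : G, if n ∈ N ∧ h ∈ H then f (n * h) else 0)
      = ∑ p : G × G, if p.1 ∈ N ∧ p.2 ∈ H then f (p.1 * p.2) else 0 :=
    (Fintype.sum_prod_type (fun p : G × G => if p.1 ∈ N ∧ p.2 ∈ H then f (p.1 * p.2) else 0)).symm
  rw [e1, ← Finset.sum_filter]
  refine (Finset.sum_bij (fun p _ => p.1 * p.2) ?_ ?_ ?_ ?_).symm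
  · intros; exact Finset.mem_univ _
  · intro p hp q hq he
    simp only [Finset.mem_filter, Finset.mem_univ, true_and] at hp hq
    have := fact_unique hinf hp.1 hp.2 hq.1 hq.2 he
    exact Prod.ext this.1 this.2
  · intro t _
    obtain ⟨n, hn, h, hh, he⟩ := fact_exists hsup t
    exact ⟨(n, h), by simp [hn, hh], he.symm⟩
  · intros; rfl

def Fse {G : Type} [Group G] [Fintype G] (N K : Subgroup G) (ψ χ : G → ℂ) (u : G) : ℂ :=
  ∑ n : G, ∑ k : G, if n ∈ N ∧ k ∈ K ∧ u = n * k then ψ n * χ k else 0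

lemma Fse_eval {G : Type} [Group G] [Fintype G] {N H K : Subgroup G}
    (hinf : N ⊓ H = ⊥) (hKH : K ≤ H) (ψ χ : G → ℂ) {n₀ k₀ : G}
    (hn₀ : n₀ ∈ N) (hk₀ : k₀ ∈ K) : Fse N K ψ χ (n₀ * k₀) = ψ n₀ * χ k₀ := by
  unfold Fse
  rw [Finset.sum_eq_single n₀]
  · rw [Finset.sum_eq_single k₀]
    · rw [if_pos ⟨hn₀, hk₀, rfl⟩]
    · intro k _ hk
      rw [if_neg]
      rintro ⟨hn, hkK, heq⟩
      exact hk (fact_unique hinf hn₀ (hKH hk₀) hn (hKH hkK) heq).2.symm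
    · intro h; exact absurd (Finset.mem_univ _) h
  · intro n _ hn
    refine Finset.sum_eq_zero fun k _ => ?_
    rw [if_neg]
    rintro ⟨hnN, hkK, heq⟩
    exact hn (fact_unique hinf hn₀ (hKH hk₀) hnN (hKH hkK) heq).1.symm
  · intro h; exact absurd (Finset.mem_univ _) h

lemma Fse_zero {G : Type} [Group G] [Fintype G] {N K : Subgroup G} (ψ χ : G → ℂ) {u : G}
    (hu : ∀ n ∈ N, ∀ k ∈ K, u ≠ n * k) : Fse N K ψ χ u = 0 := by
  refine Finset.sum_eq_zero fun n _ => Finset.sum_eq_zero fun k _ => ?_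
  rw [if_neg]
  rintro ⟨hn, hk, heq⟩
  exact hu n hn k hk heq

lemma scr_eq_Fse {G : Type} [Group G] [Fintype G] (N K : Subgroup G) (ψ χ : G → ℂ) (g : G) :
    scr N K ψ χ g = ((Nat.card N : ℂ) * (Nat.card K : ℂ))⁻¹ *
      ∑ x : G, Fse N K ψ χ (x * g * x⁻¹) := rfl

lemma L1 {G : Type} [Group G] [Fintype G] {N H K₁ K₂ : Subgroup G} (hN : N.Normal)
    (hinf : N ⊓ H = ⊥)
    (ψ₁ ψ₂ χ₁ χ₂ : G → ℂ)
    (hψ₁1 : ψ₁ 1 = 1) (hψ₁m : ∀ a ∈ N, ∀ b ∈ N, ψ₁ (a * b) = ψ₁ a * ψ₁ b)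
    (hK₁H : K₁ ≤ H) (hK₂H : K₂ ≤ H)
    (hstab₁ : ∀ k ∈ K₁, ∀ n ∈ N, ψ₁ (k * n * k⁻¹) = ψ₁ n)
    {n h : G} (hn : n ∈ N) (hh : h ∈ H) (u : G) :
    Fse N K₁ ψ₁ χ₁ ((n * h) * u * (n * h)⁻¹) * Fse N K₂ ψ₂ χ₂ u
      = Fse N K₁ ψ₁ χ₁ (h * u * h⁻¹) * Fse N K₂ ψ₂ χ₂ u := by
  by_cases hu : ∃ m ∈ N, ∃ s ∈ K₂, u = m * s
  · obtain ⟨m, hm, s, hs, rfl⟩ := hu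
    have hmN' : h * m * h⁻¹ ∈ N := hN.conj_mem m hm h
    have hkH : h * s * h⁻¹ ∈ H := mul_mem (mul_mem hh (hK₂H hs)) (inv_mem hh)
    have key1 : h * (m * s) * h⁻¹ = (h * m * h⁻¹) * (h * s * h⁻¹) := by group
    have key2 : (n * h) * (m * s) * (n * h)⁻¹
        = (n * (h * m * h⁻¹) * ((h * s * h⁻¹) * n⁻¹ * (h * s * h⁻¹)⁻¹)) * (h * s * h⁻¹) := by
      group
    have hbr : n * (h * m * h⁻¹) * ((h * s * h⁻¹) * n⁻¹ * (h * s * h⁻¹)⁻¹) ∈ N :=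
      mul_mem (mul_mem hn hmN') (hN.conj_mem n⁻¹ (inv_mem hn) (h * s * h⁻¹))
    by_cases hc : h * s * h⁻¹ ∈ K₁
    · have e1 : Fse N K₁ ψ₁ χ₁ (h * (m * s) * h⁻¹) = ψ₁ (h * m * h⁻¹) * χ₁ (h * s * h⁻¹) := by
        rw [key1]; exact Fse_eval hinf hK₁H _ _ hmN' hc
      have e2 : Fse N K₁ ψ₁ χ₁ ((n * h) * (m * s) * (n * h)⁻¹)
          = ψ₁ (n * (h * m * h⁻¹) * ((h * s * h⁻¹) * n⁻¹ * (h * s * h⁻¹)⁻¹))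
            * χ₁ (h * s * h⁻¹) := by
        rw [key2]; exact Fse_eval hinf hK₁H _ _ hbr hc
      have e3 : ψ₁ (n * (h * m * h⁻¹) * ((h * s * h⁻¹) * n⁻¹ * (h * s * h⁻¹)⁻¹))
          = ψ₁ (h * m * h⁻¹) := by
        rw [hψ₁m _ (mul_mem hn hmN') _ (hN.conj_mem n⁻¹ (inv_mem hn) (h * s * h⁻¹)),
          hψ₁m n hn _ hmN', hstab₁ _ hc n⁻¹ (inv_mem hn)]
        have hone : ψ₁ n * ψ₁ n⁻¹ = 1 := by
          rw [← hψ₁m n hn n⁻¹ (inv_mem hn), mul_inv_cancel, hψ₁1]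
        calc ψ₁ n * ψ₁ (h * m * h⁻¹) * ψ₁ n⁻¹
            = ψ₁ n * ψ₁ n⁻¹ * ψ₁ (h * m * h⁻¹) := by ring
          _ = ψ₁ (h * m * h⁻¹) := by rw [hone, one_mul]
      rw [e1, e2, e3]
    · have z1 : Fse N K₁ ψ₁ χ₁ (h * (m * s) * h⁻¹) = 0 := by
        apply Fse_zero
        intro n' hn' k' hk' heq
        rw [key1] at heq
        exact hc ((fact_unique hinf hmN' hkH hn' (hK₁H hk') heq).2 ▸ hk')
      have z2 : Fse N K₁ ψ₁ χ₁ ((n * h) * (m * s) * (n * h)⁻¹) = 0 := by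
        apply Fse_zero
        intro n' hn' k' hk' heq
        rw [key2] at heq
        exact hc ((fact_unique hinf hbr hkH hn' (hK₁H hk') heq).2 ▸ hk')
      rw [z1, z2]
  · have z : Fse N K₂ ψ₂ χ₂ u = 0 :=
      Fse_zero _ _ (fun m hm s hs heq => hu ⟨m, hm, s, hs, heq⟩)
    rw [z, mul_zero, mul_zero]

lemma Jmem {G : Type} [Group G] (K₁ K₂ : Subgroup G) (x d : G) :
    d ∈ (K₁.map (MulAut.conj x⁻¹).toMonoidHom) ⊓ K₂ ↔ x * d * x⁻¹ ∈ K₁ ∧ d ∈ K₂ := by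
  rw [Subgroup.mem_inf]
  constructor
  · rintro ⟨h1, h2⟩
    obtain ⟨k, hk, he⟩ := Subgroup.mem_map.mp h1
    refine ⟨?_, h2⟩
    have : x * d * x⁻¹ = k := by
      simp only [MulEquiv.coe_toMonoidHom, MulAut.conj_apply, inv_inv] at he
      rw [← he]; group
    rwa [this]
  · rintro ⟨h1, h2⟩
    refine ⟨Subgroup.mem_map.mpr ⟨x * d * x⁻¹, h1, ?_⟩, h2⟩
    simp only [MulEquiv.coe_toMonoidHom, MulAut.conj_apply, inv_inv]
    group

lemma L4 {G : Type} [Group G] [Fintype G] {N H K₁ K₂ : Subgroup G} (hN : N.Normal)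
    (hinf : N ⊓ H = ⊥)
    (ψ₁ ψ₂ χ₁ χ₂ : G → ℂ)
    (hK₁H : K₁ ≤ H) (hK₂H : K₂ ≤ H)
    (hstab₁ : ∀ k ∈ K₁, ∀ n ∈ N, ψ₁ (k * n * k⁻¹) = ψ₁ n)
    (hstab₂ : ∀ k ∈ K₂, ∀ n ∈ N, ψ₂ (k * n * k⁻¹) = ψ₂ n)
    (hcf₁ : ∀ a ∈ K₁, ∀ k ∈ K₁, χ₁ (a * k * a⁻¹) = χ₁ k)
    (hcf₂ : ∀ a ∈ K₂, ∀ k ∈ K₂, χ₂ (a * k * a⁻¹) = χ₂ k)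
    {x a b : G} (hx : x ∈ H) (ha : a ∈ K₁) (hb : b ∈ K₂) (u : G) :
    Fse N K₁ ψ₁ χ₁ ((a * x * b) * u * (a * x * b)⁻¹) * Fse N K₂ ψ₂ χ₂ u
      = Fse N ((K₁.map (MulAut.conj x⁻¹).toMonoidHom) ⊓ K₂)
          (fun y => ψ₁ (x * y * x⁻¹) * ψ₂ y) (fun y => χ₁ (x * y * x⁻¹) * χ₂ y)
          (b * u * b⁻¹) := by
  set J := (K₁.map (MulAut.conj x⁻¹).toMonoidHom) ⊓ K₂ with hJdef
  have hJH : J ≤ H := le_trans inf_le_right hK₂H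
  by_cases hu : ∃ m ∈ N, ∃ s ∈ K₂, u = m * s
  · obtain ⟨m, hm, s, hs, rfl⟩ := hu
    have hmN : b * m * b⁻¹ ∈ N := hN.conj_mem m hm b
    have hsK : b * s * b⁻¹ ∈ K₂ := by
      have : b * s * b⁻¹ = b * s * b⁻¹ := rfl
      exact mul_mem (mul_mem hb hs) (inv_mem hb)
    have key0 : b * (m * s) * b⁻¹ = (b * m * b⁻¹) * (b * s * b⁻¹) := by group
    have hwN : x * (b * m * b⁻¹) * x⁻¹ ∈ N := hN.conj_mem _ hmN x
    have hwH : x * (b * s * b⁻¹) * x⁻¹ ∈ H :=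
      mul_mem (mul_mem hx (hK₂H hsK)) (inv_mem hx)
    have keyL : (a * x * b) * (m * s) * (a * x * b)⁻¹
        = (a * (x * (b * m * b⁻¹) * x⁻¹) * a⁻¹) * (a * (x * (b * s * b⁻¹) * x⁻¹) * a⁻¹) := by
      group
    by_cases hc : x * (b * s * b⁻¹) * x⁻¹ ∈ K₁
    · have hdJ : b * s * b⁻¹ ∈ J := (Jmem K₁ K₂ x _).mpr ⟨hc, hsK⟩
      have eR : Fse N J (fun y => ψ₁ (x * y * x⁻¹) * ψ₂ y)
          (fun y => χ₁ (x * y * x⁻¹) * χ₂ y) (b * (m * s) * b⁻¹)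
          = (ψ₁ (x * (b * m * b⁻¹) * x⁻¹) * ψ₂ (b * m * b⁻¹))
            * (χ₁ (x * (b * s * b⁻¹) * x⁻¹) * χ₂ (b * s * b⁻¹)) := by
        rw [key0]; exact Fse_eval hinf hJH _ _ hmN hdJ
      have eL1 : Fse N K₁ ψ₁ χ₁ ((a * x * b) * (m * s) * (a * x * b)⁻¹)
          = ψ₁ (a * (x * (b * m * b⁻¹) * x⁻¹) * a⁻¹)
            * χ₁ (a * (x * (b * s * b⁻¹) * x⁻¹) * a⁻¹) := by
        rw [keyL]
        exact Fse_eval hinf hK₁H _ _ (hN.conj_mem _ hwN a)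
          (mul_mem (mul_mem ha hc) (inv_mem ha))
      have eL2 : Fse N K₂ ψ₂ χ₂ (m * s) = ψ₂ m * χ₂ s := Fse_eval hinf hK₂H _ _ hm hs
      rw [eL1, eL2, eR, hstab₁ a ha _ hwN, hcf₁ a ha _ hc]
      rw [show ψ₂ (b * m * b⁻¹) = ψ₂ m from hstab₂ b hb m hm,
        show χ₂ (b * s * b⁻¹) = χ₂ s from hcf₂ b hb s hs]
      ring
    · have zR : Fse N J (fun y => ψ₁ (x * y * x⁻¹) * ψ₂ y)
          (fun y => χ₁ (x * y * x⁻¹) * χ₂ y) (b * (m * s) * b⁻¹) = 0 := by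
        apply Fse_zero
        intro n' hn' k' hk' heq
        rw [key0] at heq
        have := (fact_unique hinf hmN (hK₂H hsK) hn' (hJH hk') heq).2
        exact hc (((Jmem K₁ K₂ x _).mp (this ▸ hk')).1)
      have zL : Fse N K₁ ψ₁ χ₁ ((a * x * b) * (m * s) * (a * x * b)⁻¹) = 0 := by
        apply Fse_zero
        intro n' hn' k' hk' heq
        rw [keyL] at heq
        have h2 := (fact_unique hinf (hN.conj_mem _ hwN a)
          (mul_mem (mul_mem (hK₁H ha) hwH) (inv_mem (hK₁H ha))) hn' (hK₁H hk') heq).2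
        have : x * (b * s * b⁻¹) * x⁻¹ = a⁻¹ * k' * a := by rw [← h2]; group
        rw [this] at hc
        exact hc (mul_mem (mul_mem (inv_mem ha) hk') ha)
      rw [zL, zR, zero_mul]
  · have zR : Fse N J (fun y => ψ₁ (x * y * x⁻¹) * ψ₂ y)
        (fun y => χ₁ (x * y * x⁻¹) * χ₂ y) (b * u * b⁻¹) = 0 := by
      apply Fse_zero
      intro n' hn' k' hk' heq
      apply hu
      refine ⟨b⁻¹ * n' * b, ?_, b⁻¹ * k' * b, ?_, ?_⟩
      · have := hN.conj_mem n' hn' b⁻¹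
        rwa [inv_inv] at this
      · have := ((Jmem K₁ K₂ x k').mp hk').2
        have h3 : b⁻¹ * k' * b = b⁻¹ * k' * b⁻¹⁻¹ := by rw [inv_inv]
        rw [h3]; exact mul_mem (mul_mem (inv_mem hb) this) (inv_mem (inv_mem hb))
      · have : u = b⁻¹ * (b * u * b⁻¹) * b := by group
        rw [this, heq]; group
    have zL : Fse N K₂ ψ₂ χ₂ u = 0 :=
      Fse_zero _ _ (fun m hm s hs heq => hu ⟨m, hm, s, hs, heq⟩)
    rw [zL, zR, mul_zero]
  done

lemma card_filter_subgroup {G : Type} [Group G] [Fintype G] (K : Subgroup G) :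
    (Finset.univ.filter (· ∈ K)).card = Nat.card K := by
  rw [Nat.card_eq_fintype_card]
  exact (Fintype.card_subtype _).symm

lemma L3 {G : Type} [Group G] [Fintype G] (K₁ K₂ : Subgroup G) (x : G) {h : G}
    (hh : ∃ a ∈ K₁, ∃ b ∈ K₂, h = a * x * b) :
    ((Finset.univ.filter fun p : G × G => p.1 ∈ K₁ ∧ p.2 ∈ K₂).filter
      (fun p => p.1 * x * p.2 = h)).card
      = Nat.card ↥((K₁.map (MulAut.conj x⁻¹).toMonoidHom) ⊓ K₂) := by
  obtain ⟨a₀, ha₀, b₀, hb₀, rfl⟩ := hh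
  rw [← card_filter_subgroup ((K₁.map (MulAut.conj x⁻¹).toMonoidHom) ⊓ K₂)]
  refine Finset.card_nbij' (fun p => p.2 * b₀⁻¹)
    (fun d => (a₀ * (x * d⁻¹ * x⁻¹), d * b₀)) ?_ ?_ ?_ ?_
  · rintro ⟨a, b⟩ hp
    simp only [Finset.mem_coe, Finset.mem_filter, Finset.mem_univ, true_and] at hp ⊢
    obtain ⟨⟨haK, hbK⟩, heq⟩ := hp
    refine (Jmem K₁ K₂ x _).mpr ⟨?_, mul_mem hbK (inv_mem hb₀)⟩
    have : x * (b * b₀⁻¹) * x⁻¹ = a⁻¹ * (a * x * b) * b₀⁻¹ * x⁻¹ := by group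
    rw [this, heq]
    have : a⁻¹ * (a₀ * x * b₀) * b₀⁻¹ * x⁻¹ = a⁻¹ * a₀ := by group
    rw [this]
    exact mul_mem (inv_mem haK) ha₀
  · intro d hd
    simp only [Finset.mem_coe, Finset.mem_filter, Finset.mem_univ, true_and] at hd ⊢
    obtain ⟨hd1, hd2⟩ := (Jmem K₁ K₂ x d).mp hd
    have hinvd : x * d⁻¹ * x⁻¹ ∈ K₁ := by
      have h4 : x * d⁻¹ * x⁻¹ = (x * d * x⁻¹)⁻¹ := by group
      rw [h4]; exact inv_mem hd1
    exact ⟨⟨mul_mem ha₀ hinvd, mul_mem hd2 hb₀⟩, by group⟩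
  · rintro ⟨a, b⟩ hp
    simp only [Finset.mem_coe, Finset.mem_filter, Finset.mem_univ, true_and] at hp
    obtain ⟨⟨haK, hbK⟩, heq⟩ := hp
    have h2 : a₀ * (x * (b * b₀⁻¹)⁻¹ * x⁻¹) = a := by
      have : a₀ * (x * (b * b₀⁻¹)⁻¹ * x⁻¹) = (a₀ * x * b₀) * b⁻¹ * x⁻¹ := by group
      rw [this, ← heq]; group
    have h3 : b * b₀⁻¹ * b₀ = b := by group
    simp only [Prod.mk.injEq]
    exact ⟨h2, h3⟩
  · intro d hd
    group

lemma DCmem {G : Type} [Group G] [Fintype G] (K₁ K₂ : Subgroup G) (x h : G) :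
    h ∈ (Finset.univ.filter fun p : G × G => p.1 ∈ K₁ ∧ p.2 ∈ K₂).image
      (fun p => p.1 * x * p.2) ↔ ∃ a ∈ K₁, ∃ b ∈ K₂, h = a * x * b := by
  constructor
  · intro hh
    obtain ⟨p, hp, he⟩ := Finset.mem_image.mp hh
    simp only [Finset.mem_filter, Finset.mem_univ, true_and] at hp
    exact ⟨p.1, hp.1, p.2, hp.2, he.symm⟩
  · rintro ⟨a, ha, b, hb, rfl⟩
    exact Finset.mem_image.mpr ⟨(a, b), by simp [ha, hb], rfl⟩

lemma L2 {G : Type} [Group G] [Fintype G] (K₁ K₂ : Subgroup G) (x : G) (f : G → ℂ) :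
    ∑ a : G, ∑ b : G, (if a ∈ K₁ ∧ b ∈ K₂ then f (a * x * b) else 0)
      = (Nat.card ↥((K₁.map (MulAut.conj x⁻¹).toMonoidHom) ⊓ K₂) : ℂ) *
        ∑ h ∈ (Finset.univ.filter fun p : G × G => p.1 ∈ K₁ ∧ p.2 ∈ K₂).image
          (fun p => p.1 * x * p.2), f h := by
  have e1 : (∑ a : G, ∑ b : G, if a ∈ K₁ ∧ b ∈ K₂ then f (a * x * b) else 0)
      = ∑ p : G × G, if p.1 ∈ K₁ ∧ p.2 ∈ K₂ then f (p.1 * x * p.2) else 0 :=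
    (Fintype.sum_prod_type (fun p : G × G =>
      if p.1 ∈ K₁ ∧ p.2 ∈ K₂ then f (p.1 * x * p.2) else 0)).symm
  rw [e1, ← Finset.sum_filter,
    Finset.sum_comp (fun h => f h) (fun p : G × G => p.1 * x * p.2), Finset.mul_sum]
  refine Finset.sum_congr rfl fun h hh => ?_
  rw [L3 K₁ K₂ x ((DCmem K₁ K₂ x h).mp hh), nsmul_eq_mul]

lemma L5 {G : Type} [Group G] [Fintype G] {H K₁ K₂ : Subgroup G}
    (hK₁H : K₁ ≤ H) (hK₂H : K₂ ≤ H)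
    (X : Finset G) (hXH : ∀ x ∈ X, x ∈ H)
    (hX : ∀ h ∈ H, ∃! x, x ∈ X ∧ ∃ a ∈ K₁, ∃ b ∈ K₂, h = a * x * b)
    (f : G → ℂ) :
    ∑ h : G, (if h ∈ H then f h else 0)
      = ∑ x ∈ X, ∑ h ∈ (Finset.univ.filter fun p : G × G => p.1 ∈ K₁ ∧ p.2 ∈ K₂).image
          (fun p => p.1 * x * p.2), f h := by
  rw [← Finset.sum_filter]
  have hmemH : ∀ x ∈ X, ∀ h, (∃ a ∈ K₁, ∃ b ∈ K₂, h = a * x * b) → h ∈ H := by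
    rintro x hx h ⟨a, ha, b, hb, rfl⟩
    exact mul_mem (mul_mem (hK₁H ha) (hXH x hx)) (hK₂H hb)
  have hset : Finset.univ.filter (· ∈ H)
      = X.biUnion (fun x => (Finset.univ.filter fun p : G × G =>
          p.1 ∈ K₁ ∧ p.2 ∈ K₂).image (fun p => p.1 * x * p.2)) := by
    ext h
    simp only [Finset.mem_filter, Finset.mem_univ, true_and, Finset.mem_biUnion]
    constructor
    · intro hh
      obtain ⟨x, ⟨hx1, hx2⟩, _⟩ := hX h hh
      exact ⟨x, hx1, (DCmem K₁ K₂ x h).mpr hx2⟩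
    · rintro ⟨x, hx, hh⟩
      exact hmemH x hx h ((DCmem K₁ K₂ x h).mp hh)
  rw [hset]
  refine Finset.sum_biUnion ?_
  intro x hx y hy hxy
  simp only [Function.onFun]
  rw [Finset.disjoint_left]
  intro h hhx hhy
  have hrx := (DCmem K₁ K₂ x h).mp hhx
  have hry := (DCmem K₁ K₂ y h).mp hhy
  have hhH : h ∈ H := hmemH x hx h hrx
  obtain ⟨z, _, huniq⟩ := hX h hhH
  exact hxy ((huniq x ⟨hx, hrx⟩).trans (huniq y ⟨hy, hry⟩).symm)

lemma char_classfun {G : Type} [Group G] [Fintype G] {K : Subgroup G} {χ : G → ℂ}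
    (hχ : ∃ V : FDRep ℂ ↥K, ∀ k : ↥K, χ ↑k = V.character k) :
    ∀ a ∈ K, ∀ k ∈ K, χ (a * k * a⁻¹) = χ k := by
  obtain ⟨V, hV⟩ := hχ
  intro a ha k hk
  have h1 := hV ((⟨a, ha⟩ : K) * ⟨k, hk⟩ * (⟨a, ha⟩ : K)⁻¹)
  have h2 := hV (⟨k, hk⟩ : K)
  rw [show ((((⟨a, ha⟩ : K) * ⟨k, hk⟩ * (⟨a, ha⟩ : K)⁻¹) : K) : G) = a * k * a⁻¹ from rfl] at h1
  rw [h1, FDRep.char_conj, ← h2]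

lemma inv_helper {c₁ cJ A B : ℂ} (hJ : cJ ≠ 0) (h : c₁ * B = cJ * A) :
    A = c₁ * cJ⁻¹ * B := by
  field_simp
  linear_combination -h

lemma inv_helper2 {cN c₁ c₂ cJ T : ℂ} (hN : cN ≠ 0) (h1 : c₁ ≠ 0) (h2 : c₂ ≠ 0)
    (hJ : cJ ≠ 0) :
    ((cN * c₁)⁻¹ * (cN * c₂)⁻¹) * (cN * (c₁ * cJ⁻¹ * (c₂ * T))) = (cN * cJ)⁻¹ * T := by
  field_simp

/-- The Mackey-type product formula for the characters `ψ ⋊ χ` of `G = N ⋊ H`: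
`(ψ₁ ⋊ χ₁)(ψ₂ ⋊ χ₂) = ∑_{x ∈ X} (ψ₁^x ψ₂) ⋊ (Res(χ₁^x) · Res(χ₂))`, where `X` is a set of
`(K₁,K₂)` double coset representatives of `H`. -/
theorem scr_product_formula (G : Type) [Group G] [Fintype G]
    (N H K₁ K₂ : Subgroup G) [hN : N.Normal]
    (hinf : N ⊓ H = ⊥) (hsup : N ⊔ H = ⊤)
    (hab : ∀ a ∈ N, ∀ b ∈ N, a * b = b * a)
    (ψ₁ ψ₂ χ₁ χ₂ : G → ℂ)
    (hψ₁1 : ψ₁ 1 = 1) (hψ₁m : ∀ a ∈ N, ∀ b ∈ N, ψ₁ (a * b) = ψ₁ a * ψ₁ b)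
    (hψ₂1 : ψ₂ 1 = 1) (hψ₂m : ∀ a ∈ N, ∀ b ∈ N, ψ₂ (a * b) = ψ₂ a * ψ₂ b)
    (hK₁H : K₁ ≤ H) (hK₂H : K₂ ≤ H)
    (hstab₁ : ∀ k ∈ K₁, ∀ n ∈ N, ψ₁ (k * n * k⁻¹) = ψ₁ n)
    (hstab₂ : ∀ k ∈ K₂, ∀ n ∈ N, ψ₂ (k * n * k⁻¹) = ψ₂ n)
    (hχ₁ : ∃ V : FDRep ℂ ↥K₁, ∀ k : ↥K₁, χ₁ ↑k = V.character k)
    (hχ₂ : ∃ V : FDRep ℂ ↥K₂, ∀ k : ↥K₂, χ₂ ↑k = V.character k)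
    (X : Finset G) (hXH : ∀ x ∈ X, x ∈ H)
    (hX : ∀ h ∈ H, ∃! x, x ∈ X ∧ ∃ a ∈ K₁, ∃ b ∈ K₂, h = a * x * b) :
    ∀ g : G,
      scr N K₁ ψ₁ χ₁ g * scr N K₂ ψ₂ χ₂ g =
        ∑ x ∈ X, scr N ((K₁.map (MulAut.conj x⁻¹).toMonoidHom) ⊓ K₂)
          (fun y => ψ₁ (x * y * x⁻¹) * ψ₂ y)
          (fun y => χ₁ (x * y * x⁻¹) * χ₂ y) g := by
  intro g
  have hcf₁ := char_classfun hχ₁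
  have hcf₂ := char_classfun hχ₂
  have hNne : (Nat.card ↥N : ℂ) ≠ 0 := Nat.cast_ne_zero.mpr Nat.card_pos.ne'
  have h1ne : (Nat.card ↥K₁ : ℂ) ≠ 0 := Nat.cast_ne_zero.mpr Nat.card_pos.ne'
  have h2ne : (Nat.card ↥K₂ : ℂ) ≠ 0 := Nat.cast_ne_zero.mpr Nat.card_pos.ne'
  have hJne : ∀ x : G,
      (Nat.card ↥((K₁.map (MulAut.conj x⁻¹).toMonoidHom) ⊓ K₂) : ℂ) ≠ 0 :=
    fun x => Nat.cast_ne_zero.mpr Nat.card_pos.ne'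
  -- Step B : expand conjugator sum over N × H
  have hB : ∀ u : G, ∑ t : G, Fse N K₁ ψ₁ χ₁ (t * u * t⁻¹) * Fse N K₂ ψ₂ χ₂ u
      = (Nat.card ↥N : ℂ) * ∑ h : G,
          (if h ∈ H then Fse N K₁ ψ₁ χ₁ (h * u * h⁻¹) * Fse N K₂ ψ₂ χ₂ u else 0) := by
    intro u
    rw [sum_factor hinf hsup (fun t => Fse N K₁ ψ₁ χ₁ (t * u * t⁻¹) * Fse N K₂ ψ₂ χ₂ u)]
    have e : ∀ n h : G,
        (if n ∈ N ∧ h ∈ H then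
            Fse N K₁ ψ₁ χ₁ ((n * h) * u * (n * h)⁻¹) * Fse N K₂ ψ₂ χ₂ u else 0)
        = (if n ∈ N then (1 : ℂ) else 0) *
          (if h ∈ H then Fse N K₁ ψ₁ χ₁ (h * u * h⁻¹) * Fse N K₂ ψ₂ χ₂ u else 0) := by
      intro n h
      by_cases hn : n ∈ N
      · by_cases hh : h ∈ H
        · rw [if_pos ⟨hn, hh⟩, if_pos hn, if_pos hh, one_mul,
            L1 hN hinf ψ₁ ψ₂ χ₁ χ₂ hψ₁1 hψ₁m hK₁H hK₂H hstab₁ hn hh u]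
        · simp [hn, hh]
      · simp [hn]
    simp_rw [e]
    rw [← Fintype.sum_mul_sum, sum_subgroup_const N 1, mul_one]
  -- Step C : double coset decomposition
  have hC : ∀ u : G, (∑ h : G,
        if h ∈ H then Fse N K₁ ψ₁ χ₁ (h * u * h⁻¹) * Fse N K₂ ψ₂ χ₂ u else 0)
      = ∑ x ∈ X, (Nat.card ↥K₁ : ℂ) *
          (Nat.card ↥((K₁.map (MulAut.conj x⁻¹).toMonoidHom) ⊓ K₂) : ℂ)⁻¹ *
          ∑ b : G, (if b ∈ K₂ then (1 : ℂ) else 0) *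
            Fse N ((K₁.map (MulAut.conj x⁻¹).toMonoidHom) ⊓ K₂)
              (fun y => ψ₁ (x * y * x⁻¹) * ψ₂ y)
              (fun y => χ₁ (x * y * x⁻¹) * χ₂ y) (b * u * b⁻¹) := by
    intro u
    rw [L5 hK₁H hK₂H X hXH hX (fun h => Fse N K₁ ψ₁ χ₁ (h * u * h⁻¹) * Fse N K₂ ψ₂ χ₂ u)]
    refine Finset.sum_congr rfl fun x hx => ?_
    have hL2 := L2 K₁ K₂ x (fun h => Fse N K₁ ψ₁ χ₁ (h * u * h⁻¹) * Fse N K₂ ψ₂ χ₂ u)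
    have e : ∀ a b : G,
        (if a ∈ K₁ ∧ b ∈ K₂ then
          Fse N K₁ ψ₁ χ₁ ((a * x * b) * u * (a * x * b)⁻¹) * Fse N K₂ ψ₂ χ₂ u else 0)
        = (if a ∈ K₁ then (1 : ℂ) else 0) *
          ((if b ∈ K₂ then (1 : ℂ) else 0) *
            Fse N ((K₁.map (MulAut.conj x⁻¹).toMonoidHom) ⊓ K₂)
              (fun y => ψ₁ (x * y * x⁻¹) * ψ₂ y)
              (fun y => χ₁ (x * y * x⁻¹) * χ₂ y) (b * u * b⁻¹)) := by
      intro a b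
      by_cases ha : a ∈ K₁
      · by_cases hb : b ∈ K₂
        · rw [if_pos ⟨ha, hb⟩, if_pos ha, if_pos hb, one_mul, one_mul,
            L4 hN hinf ψ₁ ψ₂ χ₁ χ₂ hK₁H hK₂H hstab₁ hstab₂ hcf₁ hcf₂ (hXH x hx) ha hb u]
        · simp [ha, hb]
      · simp [ha]
    simp_rw [e, ← Fintype.sum_mul_sum, sum_subgroup_const K₁ 1, mul_one] at hL2
    exact inv_helper (hJne x) hL2
  -- main identity
  have main : (∑ a : G, Fse N K₁ ψ₁ χ₁ (a * g * a⁻¹)) *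
      (∑ b : G, Fse N K₂ ψ₂ χ₂ (b * g * b⁻¹))
      = (Nat.card ↥N : ℂ) * ∑ x ∈ X, (Nat.card ↥K₁ : ℂ) *
          (Nat.card ↥((K₁.map (MulAut.conj x⁻¹).toMonoidHom) ⊓ K₂) : ℂ)⁻¹ *
          ((Nat.card ↥K₂ : ℂ) *
            ∑ c : G, Fse N ((K₁.map (MulAut.conj x⁻¹).toMonoidHom) ⊓ K₂)
              (fun y => ψ₁ (x * y * x⁻¹) * ψ₂ y)
              (fun y => χ₁ (x * y * x⁻¹) * χ₂ y) (c * g * c⁻¹)) := by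
    have stepA : (∑ a : G, Fse N K₁ ψ₁ χ₁ (a * g * a⁻¹)) *
        (∑ b : G, Fse N K₂ ψ₂ χ₂ (b * g * b⁻¹))
        = ∑ b : G, ∑ t : G,
            Fse N K₁ ψ₁ χ₁ (t * (b * g * b⁻¹) * t⁻¹) * Fse N K₂ ψ₂ χ₂ (b * g * b⁻¹) := by
      rw [Fintype.sum_mul_sum, Finset.sum_comm]
      refine Finset.sum_congr rfl fun b _ => ?_
      refine (Fintype.sum_bijective (fun t => t * b) (Group.mulRight_bijective b)
        _ _ fun t => ?_).symm
      have harg : t * (b * g * b⁻¹) * t⁻¹ = (t * b) * g * (t * b)⁻¹ := by group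
      rw [harg]
    rw [stepA]
    have stepB : ∀ b : G, (∑ t : G,
        Fse N K₁ ψ₁ χ₁ (t * (b * g * b⁻¹) * t⁻¹) * Fse N K₂ ψ₂ χ₂ (b * g * b⁻¹))
        = (Nat.card ↥N : ℂ) * ∑ x ∈ X, (Nat.card ↥K₁ : ℂ) *
            (Nat.card ↥((K₁.map (MulAut.conj x⁻¹).toMonoidHom) ⊓ K₂) : ℂ)⁻¹ *
            ∑ b' : G, (if b' ∈ K₂ then (1 : ℂ) else 0) *
              Fse N ((K₁.map (MulAut.conj x⁻¹).toMonoidHom) ⊓ K₂)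
                (fun y => ψ₁ (x * y * x⁻¹) * ψ₂ y)
                (fun y => χ₁ (x * y * x⁻¹) * χ₂ y) (b' * (b * g * b⁻¹) * b'⁻¹) := by
      intro b
      rw [hB (b * g * b⁻¹), hC (b * g * b⁻¹)]
    simp_rw [stepB]
    rw [← Finset.mul_sum, Finset.sum_comm]
    congr 1
    refine Finset.sum_congr rfl fun x hx => ?_
    rw [← Finset.mul_sum]
    congr 1
    rw [Finset.sum_comm]
    have e2 : ∀ b' : G, (∑ b : G, (if b' ∈ K₂ then (1 : ℂ) else 0) *
        Fse N ((K₁.map (MulAut.conj x⁻¹).toMonoidHom) ⊓ K₂)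
          (fun y => ψ₁ (x * y * x⁻¹) * ψ₂ y)
          (fun y => χ₁ (x * y * x⁻¹) * χ₂ y) (b' * (b * g * b⁻¹) * b'⁻¹))
        = (if b' ∈ K₂ then (1 : ℂ) else 0) *
          ∑ c : G, Fse N ((K₁.map (MulAut.conj x⁻¹).toMonoidHom) ⊓ K₂)
            (fun y => ψ₁ (x * y * x⁻¹) * ψ₂ y)
            (fun y => χ₁ (x * y * x⁻¹) * χ₂ y) (c * g * c⁻¹) := by
      intro b'
      rw [← Finset.mul_sum]
      congr 1
      refine Fintype.sum_bijective (fun b => b' * b) (Group.mulLeft_bijective b')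
        _ _ fun b => ?_
      have harg : b' * (b * g * b⁻¹) * b'⁻¹ = (b' * b) * g * (b' * b)⁻¹ := by group
      rw [harg]
    simp_rw [e2]
    rw [← Finset.sum_mul, sum_subgroup_const K₂ 1, mul_one]
  -- finish
  simp only [scr_eq_Fse]
  rw [show ∀ A B C D : ℂ, A * B * (C * D) = (A * C) * (B * D) from fun A B C D => by ring]
  rw [main, Finset.mul_sum, Finset.mul_sum]
  refine Finset.sum_congr rfl fun x hx => ?_
  exact inv_helper2 hNne h1ne h2ne (hJne x)
end
end

section
/- Let G = 1 + 𝔤 be an algebra group over F_q and let A = 1 + 𝔞 ⊆ B = 1 + 𝔟 be left ideal subgroups of G (𝔞 ⊆ 𝔟 left ideals of 𝔤). Call a function α : A → ℂ a superclass function if α(1+x) = α(1+gxa) for all g ∈ G, a ∈ A, x ∈ 𝔞 with gxa ∈ 𝔞. If α is a superclass function of A, then Ind_A^B(α) is a superclass function of B; and if β is a superclass function of B, then Res_A^B(β) is a superclass function of A. -/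
open scoped Classical

noncomputable section

/-- The units of `R` of the form `1 + x` with `x ∈ s`; for `s` a nilpotent algebra this is
the algebra group `1 + s`. -/
def unitsOf {R : Type} [Ring R] (s : Set R) : Set Rˣ :=
  {u : Rˣ | ∃ x ∈ s, (u : R) = 1 + x}

/-- `α` is a superclass function of the left ideal subgroup `1 + h` of the algebra group
`1 + g`: `α (1 + x) = α (1 + u x v)` for all `x ∈ h`, `u ∈ 1 + g`, `v ∈ 1 + h`
with `u x v ∈ h`. -/
def IsSCF {R : Type} [Ring R] (g h : Set R) (α : Rˣ → ℂ) : Prop :=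
  ∀ x ∈ h, ∀ u ∈ unitsOf g, ∀ v ∈ unitsOf h, ∀ w z : Rˣ,
    (w : R) = 1 + x → ((u : R) * x * (v : R)) ∈ h →
    (z : R) = 1 + (u : R) * x * (v : R) → α w = α z

/-- Induction of a function from the subgroup `1 + a` to the subgroup `1 + b`. -/
def indSCF {R : Type} [Ring R] [Fintype R] (a b : Set R) (α : Rˣ → ℂ) : Rˣ → ℂ :=
  fun g => ((unitsOf a).ncard : ℂ)⁻¹ *
    ∑ x : Rˣ, if x ∈ unitsOf b ∧ x * g * x⁻¹ ∈ unitsOf a then α (x * g * x⁻¹) else 0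

namespace SCFAux

variable {R : Type} [Ring R]

lemma mem_unitsOf_iff {s : Set R} {u : Rˣ} : u ∈ unitsOf s ↔ ((u : R) - 1) ∈ s := by
  constructor
  · rintro ⟨x, hx, h⟩; simpa [h] using hx
  · intro h; exact ⟨(u : R) - 1, h, by abel⟩

lemma sum_mem {h : Set R} (h0 : (0 : R) ∈ h) (hadd : ∀ x ∈ h, ∀ y ∈ h, x + y ∈ h)
    (f : ℕ → R) : ∀ (s : Finset ℕ), (∀ i ∈ s, f i ∈ h) → (∑ i ∈ s, f i) ∈ h := by
  intro s
  induction s using Finset.induction_on with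
  | empty => intro _; simpa using h0
  | insert _ _ hx ih =>
    intro hf
    rw [Finset.sum_insert hx]
    exact hadd _ (hf _ (Finset.mem_insert_self _ _)) _
      (ih fun i hi => hf i (Finset.mem_insert_of_mem hi))

lemma inv_geom {t : R} {m : ℕ} (h0 : (-t) ^ (m + 1) = 0) :
    (1 + t) * (∑ i ∈ Finset.range (m + 1), (-t) ^ i) = 1 ∧
    (∑ i ∈ Finset.range (m + 1), (-t) ^ i) * (1 + t) = 1 := by
  have h1 := geom_sum_mul (-t) (m + 1)
  have h2 := mul_geom_sum (-t) (m + 1)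
  rw [h0] at h1 h2
  constructor
  · have e : (1 + t) * (∑ i ∈ Finset.range (m + 1), (-t) ^ i)
        = -((-t - 1) * ∑ i ∈ Finset.range (m + 1), (-t) ^ i) := by noncomm_ring
    rw [e, h2]; simp
  · have e : (∑ i ∈ Finset.range (m + 1), (-t) ^ i) * (1 + t)
        = -((∑ i ∈ Finset.range (m + 1), (-t) ^ i) * (-t - 1)) := by noncomm_ring
    rw [e, h1]; simp

lemma exists_unit {g : Set R} {m : ℕ} (hpow : ∀ t ∈ g, (-t) ^ (m + 1) = 0) {t : R}
    (ht : t ∈ g) : ∃ w : Rˣ, (w : R) = 1 + t := by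
  obtain ⟨h1, h2⟩ := inv_geom (hpow t ht)
  exact ⟨⟨1 + t, _, h1, h2⟩, rfl⟩

lemma inv_mem {g h : Set R} {m : ℕ} (hgneg : ∀ x ∈ g, -x ∈ g)
    (hsub : h ⊆ g) (h0 : (0 : R) ∈ h) (hadd : ∀ x ∈ h, ∀ y ∈ h, x + y ∈ h)
    (hneg : ∀ x ∈ h, -x ∈ h) (hleft : ∀ x ∈ g, ∀ y ∈ h, x * y ∈ h)
    (hpow : ∀ t ∈ g, (-t) ^ (m + 1) = 0) {x : Rˣ} (hx : x ∈ unitsOf h) :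
    x⁻¹ ∈ unitsOf h := by
  obtain ⟨t, ht, hxt⟩ := hx
  have hg := hpow t (hsub ht)
  have hinv : ((x⁻¹ : Rˣ) : R) = ∑ i ∈ Finset.range (m + 1), (-t) ^ i :=
    Units.inv_eq_of_mul_eq_one_right (by rw [hxt]; exact (inv_geom hg).1)
  rw [mem_unitsOf_iff, hinv]
  have hS : (∑ i ∈ Finset.range (m + 1), (-t) ^ i)
      = (∑ i ∈ Finset.range m, (-t) ^ (i + 1)) + 1 := by
    rw [Finset.sum_range_succ', pow_zero]
  rw [hS, add_sub_cancel_right]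
  have hterm : ∀ i : ℕ, (-t) ^ (i + 1) ∈ h := by
    intro i
    induction i with
    | zero => simpa using hneg t ht
    | succ n ih =>
      rw [pow_succ']
      exact hleft _ (hgneg t (hsub ht)) _ ih
  exact sum_mem h0 hadd _ _ (fun i _ => hterm i)

lemma mul_mem_unitsOf {g h : Set R} (hsub : h ⊆ g) (hadd : ∀ x ∈ h, ∀ y ∈ h, x + y ∈ h)
    (hleft : ∀ x ∈ g, ∀ y ∈ h, x * y ∈ h) {x y : Rˣ}
    (hx : x ∈ unitsOf h) (hy : y ∈ unitsOf h) : x * y ∈ unitsOf h := by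
  obtain ⟨s, hs, hxs⟩ := hx
  obtain ⟨t, ht, hyt⟩ := hy
  refine ⟨s + t + s * t, hadd _ (hadd _ hs _ ht) _ (hleft s (hsub hs) t ht), ?_⟩
  rw [Units.val_mul, hxs, hyt]; noncomm_ring

lemma unit_mul_mem {g h : Set R} (hadd : ∀ x ∈ h, ∀ y ∈ h, x + y ∈ h)
    (hleft : ∀ x ∈ g, ∀ y ∈ h, x * y ∈ h) {u : Rˣ} (hu : u ∈ unitsOf g) {p : R}
    (hp : p ∈ h) : (u : R) * p ∈ h := by
  obtain ⟨c, hc, huc⟩ := hu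
  rw [huc, add_mul, one_mul]
  exact hadd _ hp _ (hleft c hc p hp)

end SCFAux

open SCFAux in
/-- For left ideal subgroups `A = 1 + a ⊆ B = 1 + b` of an algebra group `G = 1 + g`,
induction sends superclass functions of `A` to superclass functions of `B`, and restriction
sends superclass functions of `B` to superclass functions of `A`. -/
theorem ind_res_superclass_functions
    (F R : Type) [Field F] [Fintype F] [Ring R] [Fintype R] [Algebra F R]
    (g a b : Set R)
    (hg0 : (0 : R) ∈ g) (hgadd : ∀ x ∈ g, ∀ y ∈ g, x + y ∈ g)
    (hgneg : ∀ x ∈ g, -x ∈ g) (hgsmul : ∀ (c : F), ∀ x ∈ g, c • x ∈ g)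
    (hgmul : ∀ x ∈ g, ∀ y ∈ g, x * y ∈ g)
    (hnil : ∃ m : ℕ, ∀ f : Fin (m + 1) → R, (∀ i, f i ∈ g) → (List.ofFn f).prod = 0)
    (hab : a ⊆ b)
    (hasub : a ⊆ g) (ha0 : (0 : R) ∈ a) (haadd : ∀ x ∈ a, ∀ y ∈ a, x + y ∈ a)
    (haneg : ∀ x ∈ a, -x ∈ a) (hasmul : ∀ (c : F), ∀ x ∈ a, c • x ∈ a)
    (haleft : ∀ x ∈ g, ∀ y ∈ a, x * y ∈ a)
    (hbsub : b ⊆ g) (hb0 : (0 : R) ∈ b) (hbadd : ∀ x ∈ b, ∀ y ∈ b, x + y ∈ b)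
    (hbneg : ∀ x ∈ b, -x ∈ b) (hbsmul : ∀ (c : F), ∀ x ∈ b, c • x ∈ b)
    (hbleft : ∀ x ∈ g, ∀ y ∈ b, x * y ∈ b) :
    (∀ α : Rˣ → ℂ, IsSCF g a α → IsSCF g b (indSCF a b α)) ∧
    (∀ β : Rˣ → ℂ, IsSCF g b β → IsSCF g a β) := by
  obtain ⟨m, hm⟩ := hnil
  have hpow : ∀ t ∈ g, (-t) ^ (m + 1) = 0 := by
    intro t ht
    have h1 : ∀ i : Fin (m + 1), (fun _ : Fin (m + 1) => -t) i ∈ g := fun _ => hgneg t ht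
    have h2 := hm _ h1
    rwa [List.ofFn_const, List.prod_replicate] at h2
  have hginv : ∀ {u : Rˣ}, u ∈ unitsOf g → u⁻¹ ∈ unitsOf g := fun hu =>
    inv_mem hgneg (le_refl g) hg0 hgadd hgneg hgmul hpow hu
  -- left multiplication by units of `G` preserves membership in `a`, in both directions
  have hleftiffA : ∀ u ∈ unitsOf g, ∀ p : R, ((u : R) * p ∈ a ↔ p ∈ a) := by
    intro u hu p
    constructor
    · intro h
      have h2 := unit_mul_mem haadd haleft (hginv hu) h
      rwa [← mul_assoc, Units.inv_mul, one_mul] at h2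
    · exact unit_mul_mem haadd haleft hu
  have hbg : ∀ {x : Rˣ}, x ∈ unitsOf b → x ∈ unitsOf g := by
    rintro x ⟨t, ht, h⟩; exact ⟨t, hbsub ht, h⟩
  constructor
  · -- induction sends superclass functions of A to superclass functions of B
    intro α hα y hy u hu v hv w z hw huyv hz
    have one_mem_a : (1 : Rˣ) ∈ unitsOf a := ⟨0, ha0, by simp⟩
    -- the auxiliary function on the algebra
    set f : R → ℂ := fun p => ∑ t : Rˣ, if ((t : R) = 1 + p ∧ p ∈ a) then α t else 0 with hf
    have f_eq : ∀ p ∈ a, ∀ t : Rˣ, (t : R) = 1 + p → f p = α t := by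
      intro p hp t htp
      simp only [hf]
      rw [Finset.sum_eq_single t]
      · rw [if_pos ⟨htp, hp⟩]
      · intro s _ hst
        rw [if_neg]
        rintro ⟨hs, -⟩
        exact hst (Units.ext (by rw [hs, htp]))
      · intro h; exact absurd (Finset.mem_univ t) h
    have f_ne : ∀ p : R, p ∉ a → f p = 0 := by
      intro p hp
      simp only [hf]
      refine Finset.sum_eq_zero fun t _ => ?_
      rw [if_neg]
      rintro ⟨-, h⟩
      exact hp h
    -- left invariance of f under units of G
    have F1 : ∀ p ∈ unitsOf g, ∀ q : R, f ((p : R) * q) = f q := by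
      intro p hp q
      by_cases hq : q ∈ a
      · have hpq : (p : R) * q ∈ a := (hleftiffA p hp q).mpr hq
        obtain ⟨w1, hw1⟩ := exists_unit hpow (hasub hq)
        obtain ⟨w2, hw2⟩ := exists_unit hpow (hasub hpq)
        rw [f_eq q hq w1 hw1, f_eq _ hpq w2 hw2]
        exact (hα q hq p hp 1 one_mem_a w1 w2 hw1 (by simpa using hpq) (by simp [hw2])).symm
      · rw [f_ne _ hq, f_ne _ (fun h => hq ((hleftiffA p hp q).mp h))]
    -- conjugation terms expressed via f
    have key : ∀ (t s : Rˣ) (c : R), (s : R) = 1 + c →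
        (if t * s * t⁻¹ ∈ unitsOf a then α (t * s * t⁻¹) else 0)
          = f ((t : R) * c * ((t⁻¹ : Rˣ) : R)) := by
      intro t s c hsc
      have hval : ((t * s * t⁻¹ : Rˣ) : R) = 1 + (t : R) * c * ((t⁻¹ : Rˣ) : R) := by
        calc ((t * s * t⁻¹ : Rˣ) : R) = (t : R) * (s : R) * ((t⁻¹ : Rˣ) : R) := by
              simp [Units.val_mul]
          _ = (t : R) * (1 + c) * ((t⁻¹ : Rˣ) : R) := by rw [hsc]
          _ = (t : R) * ((t⁻¹ : Rˣ) : R) + (t : R) * c * ((t⁻¹ : Rˣ) : R) := by noncomm_ring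
          _ = 1 + (t : R) * c * ((t⁻¹ : Rˣ) : R) := by rw [Units.mul_inv]
      have hmemiff : t * s * t⁻¹ ∈ unitsOf a ↔ (t : R) * c * ((t⁻¹ : Rˣ) : R) ∈ a := by
        rw [mem_unitsOf_iff, hval, add_sub_cancel_left]
      by_cases hc : (t : R) * c * ((t⁻¹ : Rˣ) : R) ∈ a
      · rw [if_pos (hmemiff.mpr hc), f_eq _ hc _ hval]
      · rw [if_neg (fun h => hc (hmemiff.mp h)), f_ne _ hc]
    -- rewrite both sums
    have hL : ∀ x : Rˣ,
        (if x ∈ unitsOf b ∧ x * w * x⁻¹ ∈ unitsOf a then α (x * w * x⁻¹) else 0)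
          = if x ∈ unitsOf b then f (y * ((x⁻¹ : Rˣ) : R)) else 0 := by
      intro x
      by_cases hx : x ∈ unitsOf b
      · rw [if_pos hx, if_congr (and_iff_right hx) rfl rfl, key x w y hw, mul_assoc,
          F1 x (hbg hx)]
      · rw [if_neg (fun h => hx h.1), if_neg hx]
    have hR : ∀ x : Rˣ,
        (if x ∈ unitsOf b ∧ x * z * x⁻¹ ∈ unitsOf a then α (x * z * x⁻¹) else 0)
          = if x ∈ unitsOf b then f (y * (v : R) * ((x⁻¹ : Rˣ) : R)) else 0 := by
      intro x
      by_cases hx : x ∈ unitsOf b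
      · rw [if_pos hx, if_congr (and_iff_right hx) rfl rfl, key x z _ hz]
        have e1 : (x : R) * ((u : R) * y * (v : R)) * ((x⁻¹ : Rˣ) : R)
            = (x : R) * ((u : R) * (y * (v : R) * ((x⁻¹ : Rˣ) : R))) := by noncomm_ring
        rw [e1, F1 x (hbg hx), F1 u hu]
      · rw [if_neg (fun h => hx h.1), if_neg hx]
    have hvb : ∀ x : Rˣ, x * v ∈ unitsOf b ↔ x ∈ unitsOf b := by
      intro x
      constructor
      · intro h
        have h2 := mul_mem_unitsOf hbsub hbadd hbleft h
          (inv_mem hgneg hbsub hb0 hbadd hbneg hbleft hpow hv)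
        rwa [mul_inv_cancel_right] at h2
      · intro h; exact mul_mem_unitsOf hbsub hbadd hbleft h hv
    have hsum : (∑ x : Rˣ, if x ∈ unitsOf b then f (y * ((x⁻¹ : Rˣ) : R)) else 0)
        = ∑ x : Rˣ, if x ∈ unitsOf b then f (y * (v : R) * ((x⁻¹ : Rˣ) : R)) else 0 := by
      refine Fintype.sum_equiv (Equiv.mulRight v) _ _ fun x => ?_
      have hc : y * (v : R) * ((((x * v)⁻¹ : Rˣ)) : R) = y * ((x⁻¹ : Rˣ) : R) := by
        rw [mul_inv_rev, Units.val_mul]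
        simp [mul_assoc]
      simp only [Equiv.coe_mulRight, hvb x, hc]
    simp only [indSCF]
    congr 1
    calc (∑ x : Rˣ, if x ∈ unitsOf b ∧ x * w * x⁻¹ ∈ unitsOf a then α (x * w * x⁻¹) else 0)
        = ∑ x : Rˣ, if x ∈ unitsOf b then f (y * ((x⁻¹ : Rˣ) : R)) else 0 :=
          Finset.sum_congr rfl fun x _ => hL x
      _ = ∑ x : Rˣ, if x ∈ unitsOf b then f (y * (v : R) * ((x⁻¹ : Rˣ) : R)) else 0 := hsum
      _ = ∑ x : Rˣ, if x ∈ unitsOf b ∧ x * z * x⁻¹ ∈ unitsOf a then α (x * z * x⁻¹) else 0 :=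
          (Finset.sum_congr rfl fun x _ => hR x).symm
  · -- restriction
    intro β hβ x hx u hu v hv w z hw hmem hz
    have hv' : v ∈ unitsOf b := by
      obtain ⟨t, ht, h⟩ := hv
      exact ⟨t, hab ht, h⟩
    exact hβ x (hab hx) u hu v hv' w z hw (hab hmem) hz
end
end

section
/- Let G = 1 + 𝔤 be an algebra group over F_q, H = 1 + 𝔥 a left ideal subgroup, θ : (F_q, +) → ℂ^× a nontrivial homomorphism, and for λ ∈ 𝔥^* define the supercharacter χ_λ = (|Gλ| / |GλH|) Σ_{μ ∈ GλH} θ ∘ μ ∘ f, where f(1+x) = x and (gμh)(x) = μ(g⁻¹xh⁻¹). Then for every g ∈ G, the conjugate function (χ_λ)^g equals χ_{λ^g}, where λ^g(x) = λ(gxg⁻¹). In particular (χ_λ)^g is a supercharacter of H^g. -/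
open scoped Classical

noncomputable section

/-- The two-sided orbit `G λ H` of a functional `λ` on the left ideal `h`, recorded as
functions vanishing off `h`: `(u λ v)(x) = λ (u⁻¹ x v⁻¹)`. -/
def biOrb {F R : Type} [Zero F] [Ring R] (g h : Set R) (lam : R → F) : Set (R → F) :=
  {μ | ∃ u ∈ unitsOf g, ∃ v ∈ unitsOf h,
    μ = fun x => if x ∈ h then lam (((u⁻¹ : Rˣ) : R) * x * ((v⁻¹ : Rˣ) : R)) else 0}

/-- The left orbit `G λ` of a functional `λ` on the left ideal `h`. -/
def leftOrb {F R : Type} [Zero F] [Ring R] (g h : Set R) (lam : R → F) : Set (R → F) :=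
  {μ | ∃ u ∈ unitsOf g,
    μ = fun x => if x ∈ h then lam (((u⁻¹ : Rˣ) : R) * x) else 0}

/-- The supercharacter `χ_λ = (|Gλ|/|GλH|) ∑_{μ ∈ GλH} θ ∘ μ ∘ f` of the left ideal
subgroup `1 + h` of the algebra group `1 + g`, where `f(1+x) = x`. -/
def superchar {F R : Type} [Field F] [Fintype F] [Ring R] [Fintype R]
    (g h : Set R) (lam : R → F) (θ : AddChar F ℂ) : Rˣ → ℂ :=
  fun u => (((leftOrb g h lam).ncard : ℂ) / ((biOrb g h lam).ncard : ℂ)) *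
    ∑ μ ∈ (biOrb g h lam).toFinset, θ (μ ((u : R) - 1))

/-! ### Auxiliary lemmas -/

lemma pow_succ_mem' {R : Type} [Ring R] {g : Set R}
    (hgmul : ∀ x ∈ g, ∀ y ∈ g, x * y ∈ g) {x : R} (hx : x ∈ g) :
    ∀ n : ℕ, x ^ (n + 1) ∈ g
  | 0 => by simpa using hx
  | n + 1 => by
    rw [pow_succ]
    exact hgmul _ (pow_succ_mem' hgmul hx n) _ hx

lemma inv_val_eq' {R : Type} [Ring R] {g : Set R}
    (hg0 : (0 : R) ∈ g) (hgadd : ∀ x ∈ g, ∀ y ∈ g, x + y ∈ g)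
    (hgneg : ∀ x ∈ g, -x ∈ g)
    (hgmul : ∀ x ∈ g, ∀ y ∈ g, x * y ∈ g)
    (hnil : ∃ m : ℕ, ∀ f : Fin (m + 1) → R, (∀ i, f i ∈ g) → (List.ofFn f).prod = 0)
    {u : Rˣ} {x : R} (hx : x ∈ g) (hux : (u : R) = 1 + x) :
    ∃ c ∈ g, ((u⁻¹ : Rˣ) : R) = 1 + c := by
  obtain ⟨m, hm⟩ := hnil
  have hxN : x ^ (m + 1) = 0 := by
    have h0 : x * x ^ m = 0 := by
      have := hm (fun _ => x) (fun _ => hx)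
      simpa [List.prod_replicate] using this
    rw [pow_succ']; exact h0
  have hxN' : (-x) ^ (m + 1) = 0 := by
    rw [neg_pow, hxN, mul_zero]
  set s : R := ∑ i ∈ Finset.range (m + 1), (-x) ^ i with hs
  have h1 : (1 + x) * s = 1 := by
    have h := mul_geom_sum (-x) (m + 1)
    rw [hxN'] at h
    have h2 : (1 + x) * s = -((-x - 1) * s) := by noncomm_ring
    rw [h2, h]
    norm_num
  have hinv : ((u⁻¹ : Rˣ) : R) = s := by
    apply Units.inv_eq_of_mul_eq_one_right
    rw [hux]; exact h1
  refine ⟨s - 1, ?_, by rw [hinv]; noncomm_ring⟩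
  have hsum : s - 1 = ∑ i ∈ Finset.range m, (-x) ^ (i + 1) := by
    rw [hs, Finset.sum_range_succ', pow_zero, add_sub_cancel_right]
  rw [hsum]
  refine Finset.sum_induction _ (· ∈ g) (fun a b ha hb => hgadd a ha b hb) hg0 ?_
  intro i _
  exact pow_succ_mem' hgmul (hgneg _ hx) i

/-- Conjugation of functions on `R` by the unit `gu`. -/
def conjFun {F R : Type} [Ring R] (gu : Rˣ) (μ : R → F) : R → F :=
  fun x => μ ((gu : R) * x * ((gu⁻¹ : Rˣ) : R))

lemma conjFun_inj {F R : Type} [Ring R] (gu : Rˣ) :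
    Function.Injective (conjFun (F := F) (R := R) gu) := by
  intro μ₁ μ₂ hμ
  funext x
  have h := congrFun hμ (((gu⁻¹ : Rˣ) : R) * x * (gu : R))
  have key : (gu : R) * (((gu⁻¹ : Rˣ) : R) * x * (gu : R)) * ((gu⁻¹ : Rˣ) : R) = x := by
    rw [show (gu : R) * (((gu⁻¹ : Rˣ) : R) * x * (gu : R)) * ((gu⁻¹ : Rˣ) : R)
        = ((gu : R) * ((gu⁻¹ : Rˣ) : R)) * x * ((gu : R) * ((gu⁻¹ : Rˣ) : R)) by noncomm_ring,
      Units.mul_inv, one_mul, mul_one]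
  simpa only [conjFun, key] using h

lemma conj_unitsOf {R : Type} [Ring R] {s t : Set R} (p : Rˣ)
    (hst : ∀ a ∈ s, (p : R) * a * ((p⁻¹ : Rˣ) : R) ∈ t) :
    ∀ v ∈ unitsOf s, p * v * p⁻¹ ∈ unitsOf t := by
  rintro v ⟨y, hy, hvy⟩
  refine ⟨(p : R) * y * ((p⁻¹ : Rˣ) : R), hst y hy, ?_⟩
  rw [Units.val_mul, Units.val_mul, hvy, mul_add, mul_one, add_mul, Units.mul_inv]

section ConjOrb

variable {F R : Type} [Zero F] [Ring R] {g h : Set R} (lam : R → F) (gu : Rˣ)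

lemma mem_conj_image (x : R) :
    x ∈ ((fun x => ((gu⁻¹ : Rˣ) : R) * x * (gu : R)) '' h) ↔
      (gu : R) * x * ((gu⁻¹ : Rˣ) : R) ∈ h := by
  have e1 : ∀ t : R, (gu : R) * (((gu⁻¹ : Rˣ) : R) * t) = t := fun t => by
    rw [← mul_assoc, Units.mul_inv, one_mul]
  have e2 : ∀ t : R, ((gu⁻¹ : Rˣ) : R) * ((gu : R) * t) = t := fun t => by
    rw [← mul_assoc, Units.inv_mul, one_mul]
  constructor
  · rintro ⟨y, hy, rfl⟩
    have : (gu : R) * (((gu⁻¹ : Rˣ) : R) * y * (gu : R)) * ((gu⁻¹ : Rˣ) : R) = y := by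
      simp only [mul_assoc, e1, e2, Units.mul_inv, Units.inv_mul, mul_one]
    rwa [this]
  · intro hx
    exact ⟨(gu : R) * x * ((gu⁻¹ : Rˣ) : R), hx, by
      simp only [mul_assoc, e1, e2, Units.mul_inv, Units.inv_mul, mul_one]⟩

lemma biOrb_conj
    (hconj1 : ∀ a ∈ g, ((gu⁻¹ : Rˣ) : R) * a * (gu : R) ∈ g)
    (hconj2 : ∀ a ∈ g, (gu : R) * a * ((gu⁻¹ : Rˣ) : R) ∈ g) :
    biOrb g ((fun x => ((gu⁻¹ : Rˣ) : R) * x * (gu : R)) '' h)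
        (fun x => lam ((gu : R) * x * ((gu⁻¹ : Rˣ) : R)))
      = conjFun gu '' biOrb g h lam := by
  have e1 : ∀ t : R, (gu : R) * (((gu⁻¹ : Rˣ) : R) * t) = t := fun t => by
    rw [← mul_assoc, Units.mul_inv, one_mul]
  have e2 : ∀ t : R, ((gu⁻¹ : Rˣ) : R) * ((gu : R) * t) = t := fun t => by
    rw [← mul_assoc, Units.inv_mul, one_mul]
  have hu_fwd : ∀ u' ∈ unitsOf g, gu * u' * gu⁻¹ ∈ unitsOf g :=
    conj_unitsOf gu hconj2
  have hu_bwd : ∀ u ∈ unitsOf g, gu⁻¹ * u * gu ∈ unitsOf g := by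
    intro u hu
    have := conj_unitsOf (gu⁻¹) (t := g) (fun a ha => by
      rw [inv_inv]; exact hconj1 a ha) u hu
    rwa [inv_inv] at this
  have hv_fwd : ∀ v' ∈ unitsOf ((fun x => ((gu⁻¹ : Rˣ) : R) * x * (gu : R)) '' h),
      gu * v' * gu⁻¹ ∈ unitsOf h :=
    conj_unitsOf gu (fun a ha => (mem_conj_image (h := h) gu a).mp ha)
  have hv_bwd : ∀ v ∈ unitsOf h,
      gu⁻¹ * v * gu ∈ unitsOf ((fun x => ((gu⁻¹ : Rˣ) : R) * x * (gu : R)) '' h) := by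
    intro v hv
    have := conj_unitsOf (gu⁻¹)
      (t := (fun x => ((gu⁻¹ : Rˣ) : R) * x * (gu : R)) '' h) (fun a ha => by
        rw [inv_inv]; exact ⟨a, ha, rfl⟩) v hv
    rwa [inv_inv] at this
  ext μ'
  constructor
  · rintro ⟨u', hu', v', hv', rfl⟩
    refine ⟨fun x => if x ∈ h then
        lam (((gu * u' * gu⁻¹)⁻¹ : Rˣ) * x * (((gu * v' * gu⁻¹)⁻¹ : Rˣ) : R)) else 0,
      ⟨gu * u' * gu⁻¹, hu_fwd u' hu', gu * v' * gu⁻¹, hv_fwd v' hv', rfl⟩, ?_⟩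
    funext x
    simp only [conjFun]
    by_cases hx : (gu : R) * x * ((gu⁻¹ : Rˣ) : R) ∈ h
    · rw [if_pos hx, if_pos ((mem_conj_image (h := h) gu x).mpr hx)]
      congr 1
      simp only [mul_inv_rev, inv_inv, Units.val_mul, mul_assoc, e1, e2,
        Units.mul_inv, Units.inv_mul, mul_one]
    · rw [if_neg hx, if_neg (fun hc => hx ((mem_conj_image (h := h) gu x).mp hc))]
  · rintro ⟨μ, ⟨u, hu, v, hv, rfl⟩, rfl⟩
    refine ⟨gu⁻¹ * u * gu, hu_bwd u hu, gu⁻¹ * v * gu, hv_bwd v hv, ?_⟩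
    funext x
    simp only [conjFun]
    by_cases hx : x ∈ ((fun x => ((gu⁻¹ : Rˣ) : R) * x * (gu : R)) '' h)
    · rw [if_pos ((mem_conj_image (h := h) gu x).mp hx), if_pos hx]
      congr 1
      simp only [mul_inv_rev, inv_inv, Units.val_mul, mul_assoc, e1, e2,
        Units.mul_inv, Units.inv_mul, mul_one]
    · rw [if_neg (fun hc => hx ((mem_conj_image (h := h) gu x).mpr hc)), if_neg hx]

lemma leftOrb_conj
    (hconj1 : ∀ a ∈ g, ((gu⁻¹ : Rˣ) : R) * a * (gu : R) ∈ g)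
    (hconj2 : ∀ a ∈ g, (gu : R) * a * ((gu⁻¹ : Rˣ) : R) ∈ g) :
    leftOrb g ((fun x => ((gu⁻¹ : Rˣ) : R) * x * (gu : R)) '' h)
        (fun x => lam ((gu : R) * x * ((gu⁻¹ : Rˣ) : R)))
      = conjFun gu '' leftOrb g h lam := by
  have e1 : ∀ t : R, (gu : R) * (((gu⁻¹ : Rˣ) : R) * t) = t := fun t => by
    rw [← mul_assoc, Units.mul_inv, one_mul]
  have e2 : ∀ t : R, ((gu⁻¹ : Rˣ) : R) * ((gu : R) * t) = t := fun t => by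
    rw [← mul_assoc, Units.inv_mul, one_mul]
  have hu_fwd : ∀ u' ∈ unitsOf g, gu * u' * gu⁻¹ ∈ unitsOf g :=
    conj_unitsOf gu hconj2
  have hu_bwd : ∀ u ∈ unitsOf g, gu⁻¹ * u * gu ∈ unitsOf g := by
    intro u hu
    have := conj_unitsOf (gu⁻¹) (t := g) (fun a ha => by
      rw [inv_inv]; exact hconj1 a ha) u hu
    rwa [inv_inv] at this
  ext μ'
  constructor
  · rintro ⟨u', hu', rfl⟩
    refine ⟨fun x => if x ∈ h then
        lam (((gu * u' * gu⁻¹)⁻¹ : Rˣ) * x) else 0,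
      ⟨gu * u' * gu⁻¹, hu_fwd u' hu', rfl⟩, ?_⟩
    funext x
    simp only [conjFun]
    by_cases hx : (gu : R) * x * ((gu⁻¹ : Rˣ) : R) ∈ h
    · rw [if_pos hx, if_pos ((mem_conj_image (h := h) gu x).mpr hx)]
      congr 1
      simp only [mul_inv_rev, inv_inv, Units.val_mul, mul_assoc, e1, e2,
        Units.mul_inv, Units.inv_mul, mul_one]
    · rw [if_neg hx, if_neg (fun hc => hx ((mem_conj_image (h := h) gu x).mp hc))]
  · rintro ⟨μ, ⟨u, hu, rfl⟩, rfl⟩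
    refine ⟨gu⁻¹ * u * gu, hu_bwd u hu, ?_⟩
    funext x
    simp only [conjFun]
    by_cases hx : x ∈ ((fun x => ((gu⁻¹ : Rˣ) : R) * x * (gu : R)) '' h)
    · rw [if_pos ((mem_conj_image (h := h) gu x).mp hx), if_pos hx]
      congr 1
      simp only [mul_inv_rev, inv_inv, Units.val_mul, mul_assoc, e1, e2,
        Units.mul_inv, Units.inv_mul, mul_one]
    · rw [if_neg (fun hc => hx ((mem_conj_image (h := h) gu x).mpr hc)), if_neg hx]

end ConjOrb

/-- Conjugating the left-ideal supercharacter `χ_λ` by `g ∈ G` gives the supercharacter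
`χ_{λ^g}` of the conjugate left ideal subgroup, where `λ^g(x) = λ (g x g⁻¹)`. -/
theorem superchar_conj
    (F R : Type) [Field F] [Fintype F] [Ring R] [Fintype R] [Algebra F R]
    (g h : Set R)
    (hg0 : (0 : R) ∈ g) (hgadd : ∀ x ∈ g, ∀ y ∈ g, x + y ∈ g)
    (hgneg : ∀ x ∈ g, -x ∈ g) (hgsmul : ∀ (c : F), ∀ x ∈ g, c • x ∈ g)
    (hgmul : ∀ x ∈ g, ∀ y ∈ g, x * y ∈ g)
    (hnil : ∃ m : ℕ, ∀ f : Fin (m + 1) → R, (∀ i, f i ∈ g) → (List.ofFn f).prod = 0)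
    (hhsub : h ⊆ g) (hh0 : (0 : R) ∈ h) (hhadd : ∀ x ∈ h, ∀ y ∈ h, x + y ∈ h)
    (hhneg : ∀ x ∈ h, -x ∈ h) (hhsmul : ∀ (c : F), ∀ x ∈ h, c • x ∈ h)
    (hhleft : ∀ x ∈ g, ∀ y ∈ h, x * y ∈ h)
    (lam : R →ₗ[F] F) (θ : AddChar F ℂ) (hθ : ∃ c : F, θ c ≠ 1) :
    ∀ gu ∈ unitsOf g, ∀ w : Rˣ,
      superchar g h (⇑lam) θ (gu * w * gu⁻¹) =
        superchar g ((fun x => ((gu⁻¹ : Rˣ) : R) * x * ((gu : Rˣ) : R)) '' h)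
          (fun x => lam ((gu : R) * x * ((gu⁻¹ : Rˣ) : R))) θ w := by
  intro gu hgu w
  obtain ⟨b, hb, hgub⟩ := hgu
  obtain ⟨c, hc, hguc⟩ := inv_val_eq' hg0 hgadd hgneg hgmul hnil hb hgub
  have hconj1 : ∀ a ∈ g, ((gu⁻¹ : Rˣ) : R) * a * (gu : R) ∈ g := by
    intro a ha
    have key : ((gu⁻¹ : Rˣ) : R) * a * (gu : R)
        = a + (c * a + (a * b + c * (a * b))) := by
      rw [hgub, hguc]; noncomm_ring
    rw [key]
    exact hgadd _ ha _ (hgadd _ (hgmul _ hc _ ha) _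
      (hgadd _ (hgmul _ ha _ hb) _ (hgmul _ hc _ (hgmul _ ha _ hb))))
  have hconj2 : ∀ a ∈ g, (gu : R) * a * ((gu⁻¹ : Rˣ) : R) ∈ g := by
    intro a ha
    have key : (gu : R) * a * ((gu⁻¹ : Rˣ) : R)
        = a + (b * a + (a * c + b * (a * c))) := by
      rw [hgub, hguc]; noncomm_ring
    rw [key]
    exact hgadd _ ha _ (hgadd _ (hgmul _ hb _ ha) _
      (hgadd _ (hgmul _ ha _ hc) _ (hgmul _ hb _ (hgmul _ ha _ hc))))
  have hB := biOrb_conj (g := g) (h := h) (⇑lam) gu hconj1 hconj2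
  have hL := leftOrb_conj (g := g) (h := h) (⇑lam) gu hconj1 hconj2
  have hinj := conjFun_inj (F := F) (R := R) gu
  have hcardB : (biOrb g ((fun x => ((gu⁻¹ : Rˣ) : R) * x * (gu : R)) '' h)
      (fun x => lam ((gu : R) * x * ((gu⁻¹ : Rˣ) : R)))).ncard
      = (biOrb g h (⇑lam)).ncard := by
    rw [hB, Set.ncard_image_of_injective _ hinj]
  have hcardL : (leftOrb g ((fun x => ((gu⁻¹ : Rˣ) : R) * x * (gu : R)) '' h)
      (fun x => lam ((gu : R) * x * ((gu⁻¹ : Rˣ) : R)))).ncard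
      = (leftOrb g h (⇑lam)).ncard := by
    rw [hL, Set.ncard_image_of_injective _ hinj]
  have hsum : ∑ μ ∈ (biOrb g ((fun x => ((gu⁻¹ : Rˣ) : R) * x * (gu : R)) '' h)
        (fun x => lam ((gu : R) * x * ((gu⁻¹ : Rˣ) : R)))).toFinset,
        θ (μ ((w : R) - 1))
      = ∑ μ ∈ (biOrb g h (⇑lam)).toFinset, θ (μ (((gu * w * gu⁻¹ : Rˣ) : R) - 1)) := by
    refine Finset.sum_nbij' (i := fun μ => fun x => μ (((gu⁻¹ : Rˣ) : R) * x * (gu : R)))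
      (j := conjFun gu) ?_ ?_ ?_ ?_ ?_
    · intro μ' hμ'
      rw [Set.mem_toFinset] at hμ' ⊢
      rw [hB] at hμ'
      obtain ⟨μ, hμ, rfl⟩ := hμ'
      have key : (fun x => conjFun gu μ (((gu⁻¹ : Rˣ) : R) * x * (gu : R))) = μ := by
        funext x
        simp only [conjFun]
        congr 1
        rw [show (gu : R) * (((gu⁻¹ : Rˣ) : R) * x * (gu : R)) * ((gu⁻¹ : Rˣ) : R)
            = ((gu : R) * ((gu⁻¹ : Rˣ) : R)) * x * ((gu : R) * ((gu⁻¹ : Rˣ) : R)) by noncomm_ring,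
          Units.mul_inv, one_mul, mul_one]
      show (fun x => conjFun gu μ (((gu⁻¹ : Rˣ) : R) * x * (gu : R))) ∈ biOrb g h (⇑lam)
      rw [key]
      exact hμ
    · intro μ hμ
      rw [Set.mem_toFinset] at hμ ⊢
      rw [hB]
      exact ⟨μ, hμ, rfl⟩
    · intro μ' hμ'
      funext x
      simp only [conjFun]
      congr 1
      rw [show ((gu⁻¹ : Rˣ) : R) * ((gu : R) * x * ((gu⁻¹ : Rˣ) : R)) * (gu : R)
          = (((gu⁻¹ : Rˣ) : R) * (gu : R)) * x * (((gu⁻¹ : Rˣ) : R) * (gu : R)) by noncomm_ring,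
        Units.inv_mul, one_mul, mul_one]
    · intro μ hμ
      funext x
      simp only [conjFun]
      congr 1
      rw [show (gu : R) * (((gu⁻¹ : Rˣ) : R) * x * (gu : R)) * ((gu⁻¹ : Rˣ) : R)
          = ((gu : R) * ((gu⁻¹ : Rˣ) : R)) * x * ((gu : R) * ((gu⁻¹ : Rˣ) : R)) by noncomm_ring,
        Units.mul_inv, one_mul, mul_one]
    · intro μ' hμ'
      have harg : ((gu⁻¹ : Rˣ) : R) * (((gu * w * gu⁻¹ : Rˣ) : R) - 1) * (gu : R)
          = (w : R) - 1 := by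
        rw [Units.val_mul, Units.val_mul]
        rw [show ((gu⁻¹ : Rˣ) : R) * ((gu : R) * (w : R) * ((gu⁻¹ : Rˣ) : R) - 1) * (gu : R)
            = (((gu⁻¹ : Rˣ) : R) * (gu : R)) * (w : R) * (((gu⁻¹ : Rˣ) : R) * (gu : R))
              - ((gu⁻¹ : Rˣ) : R) * (gu : R) by noncomm_ring,
          Units.inv_mul, one_mul, mul_one]
      show θ (μ' ((w : R) - 1))
          = θ (μ' (((gu⁻¹ : Rˣ) : R) * (((gu * w * gu⁻¹ : Rˣ) : R) - 1) * (gu : R)))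
      rw [harg]
  simp only [superchar]
  rw [hcardB, hcardL, hsum]
end
end
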